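/- arXiv:0909.1694 — 5 statements merged into one kernel-verified Lean document; each statement's English description precedes it below -/
import Mathlib

section
/- For every integer n ≥ 2, the Bernoulli–Carlitz fraction satisfies β_n = Σ_{k≥1} q^k [k]^{n−1} − (n+1) Σ_{k≥1} q^{2k} [k]^{n−1}, as an identity of formal power series in q (both sides being q-adically convergent and equal to the rational function β_n). -/
/-- The quantum integer `[k] = 1 + q + ⋯ + q^{k-1}` as a polynomial over `ℚ`. -/
noncomputable def qIntP (k : ℕ) : Polynomial ℚ := ∑ i ∈ Finset.range k, Polynomial.X ^ i

/-- The power series `Σ_{k≥1} q^k [k]^{n-1} − (n+1) Σ_{k≥1} q^{2k} [k]^{n-1}`; the `k`-th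
summand has order at least `k`, so the `d`-th coefficient only involves `k ≤ d`. -/
noncomputable def carlitzSeries (n : ℕ) : PowerSeries ℚ :=
  PowerSeries.mk fun d =>
    ∑ k ∈ Finset.Icc 1 d, Polynomial.coeff
      (Polynomial.X ^ k * qIntP k ^ (n - 1)
        - ((n : Polynomial ℚ) + 1) * Polynomial.X ^ (2 * k) * qIntP k ^ (n - 1)) d

namespace RatFunc

variable {F : Type*} [Field F]

theorem coe_mul (f g : RatFunc F) :
    ((f * g : RatFunc F) : LaurentSeries F) = (f : LaurentSeries F) * g := map_mul _ f g

theorem coe_add (f g : RatFunc F) :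
    ((f + g : RatFunc F) : LaurentSeries F) = (f : LaurentSeries F) + g := map_add _ f g

theorem coe_sub (f g : RatFunc F) :
    ((f - g : RatFunc F) : LaurentSeries F) = (f : LaurentSeries F) - g := map_sub _ f g

theorem coe_pow (f : RatFunc F) (n : ℕ) :
    ((f ^ n : RatFunc F) : LaurentSeries F) = (f : LaurentSeries F) ^ n := map_pow _ f n

theorem coe_one : ((1 : RatFunc F) : LaurentSeries F) = 1 := map_one _

theorem coe_zero : ((0 : RatFunc F) : LaurentSeries F) = 0 := map_zero _

theorem coe_C (c : F) : ((C c : RatFunc F) : LaurentSeries F) = HahnSeries.C c := by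
  have h := coe_coe (Polynomial.C c)
  rw [Polynomial.coe_C, HahnSeries.ofPowerSeries_C] at h
  rw [← algebraMap_C]
  exact h.symm

end RatFunc

open PowerSeries

namespace BC

abbrev R : Type := RatFunc ℚ

/-- quantum integer as a rational function -/
noncomputable def qI (k : ℕ) : R := ∑ i ∈ Finset.range k, RatFunc.X ^ i

/-- exponential generating function of the β's -/
noncomputable def Agf (β : ℕ → R) : PowerSeries R :=
  PowerSeries.mk fun b => algebraMap ℚ R ((b.factorial : ℚ)⁻¹) * β b

lemma rescale_C' {S : Type*} [CommSemiring S] (a r : S) :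
    rescale a (PowerSeries.C r) = PowerSeries.C r := by
  ext n
  simp only [coeff_rescale, PowerSeries.coeff_C]
  split <;> simp_all

lemma rescale_X' {S : Type*} [CommSemiring S] (a : S) :
    rescale a (PowerSeries.X : PowerSeries S) = PowerSeries.C a * PowerSeries.X := by
  ext n
  simp only [coeff_rescale, PowerSeries.coeff_X, coeff_C_mul]
  split <;> simp_all

/-- The functional equation `A(x) = q eˣ A(qx) + (1 - q) - x` for the EGF of the
Bernoulli–Carlitz numbers. -/
lemma funEq (β : ℕ → R) (h0 : β 0 = 1)
    (hrec : ∀ m : ℕ, 1 ≤ m →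
      RatFunc.X * (∑ i ∈ Finset.range (m + 1), (m.choose i : R) * RatFunc.X ^ i * β i)
        - β m = if m = 1 then 1 else 0) :
    Agf β = PowerSeries.C RatFunc.X * (exp R * rescale RatFunc.X (Agf β))
      + (PowerSeries.C (1 - RatFunc.X) - PowerSeries.X) := by
  ext n
  rw [map_add, map_sub, coeff_C_mul, PowerSeries.coeff_mul,
    Finset.Nat.sum_antidiagonal_eq_sum_range_succ_mk]
  simp only [coeff_exp, coeff_rescale, Agf, coeff_mk]
  have hs : ∑ i ∈ Finset.range (n + 1),
      algebraMap ℚ R (1 / (i.factorial : ℚ)) *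
        (RatFunc.X ^ (n - i) * (algebraMap ℚ R (((n - i).factorial : ℚ)⁻¹) * β (n - i)))
      = ∑ j ∈ Finset.range (n + 1),
      algebraMap ℚ R (1 / ((n - j).factorial : ℚ)) *
        (RatFunc.X ^ j * (algebraMap ℚ R ((j.factorial : ℚ)⁻¹) * β j)) := by
    rw [← Finset.sum_range_reflect]
    refine Finset.sum_congr rfl fun j hj => ?_
    have hj' : j ≤ n := Nat.lt_succ_iff.mp (Finset.mem_range.mp hj)
    rw [Nat.succ_sub_one, Nat.sub_sub_self hj']
  rw [hs]
  have hs2 : ∑ j ∈ Finset.range (n + 1),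
      algebraMap ℚ R (1 / ((n - j).factorial : ℚ)) *
        (RatFunc.X ^ j * (algebraMap ℚ R ((j.factorial : ℚ)⁻¹) * β j))
      = algebraMap ℚ R ((n.factorial : ℚ)⁻¹) *
        ∑ i ∈ Finset.range (n + 1), (n.choose i : R) * RatFunc.X ^ i * β i := by
    rw [Finset.mul_sum]
    refine Finset.sum_congr rfl fun j hj => ?_
    have hj' : j ≤ n := Nat.lt_succ_iff.mp (Finset.mem_range.mp hj)
    have hq : (1 / ((n - j).factorial : ℚ)) * (j.factorial : ℚ)⁻¹
        = (n.factorial : ℚ)⁻¹ * (n.choose j : ℚ) := by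
      rw [Nat.cast_choose ℚ hj']
      field_simp
    have hcc : (n.choose j : R) = algebraMap ℚ R (n.choose j : ℚ) := by
      simp
    rw [hcc]
    rw [show algebraMap ℚ R (1 / ((n - j).factorial : ℚ)) *
        (RatFunc.X ^ j * (algebraMap ℚ R ((j.factorial : ℚ)⁻¹) * β j))
      = (algebraMap ℚ R (1 / ((n - j).factorial : ℚ)) * algebraMap ℚ R ((j.factorial : ℚ)⁻¹))
        * RatFunc.X ^ j * β j by ring, ← map_mul, hq, map_mul]
    ring
  rw [hs2]
  rcases n with _ | n
  · simp [h0]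
  · have hr := hrec (n + 1) (Nat.le_add_left 1 n)
    have hC : (PowerSeries.coeff (n+1)) (PowerSeries.C (1 - RatFunc.X : R)) = 0 := by
      simp
    have hX : (PowerSeries.coeff (n+1)) (PowerSeries.X : PowerSeries R)
        = if n + 1 = 1 then 1 else 0 := by
      rw [PowerSeries.coeff_X]
    rw [hC, hX]
    have ha : algebraMap ℚ R (((n+1).factorial : ℚ)⁻¹) * (if n + 1 = 1 then (1:R) else 0)
        = (if n + 1 = 1 then (1:R) else 0) := by
      split
      · next h => simp [h]
      · simp
    linear_combination (-(algebraMap ℚ R (((n+1).factorial : ℚ)⁻¹))) * hr - ha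

/-- The iterated functional equation:
`A(x) = q^N e^{[N]x} A(q^N x) + Σ_{k<N} q^k e^{[k]x} (1 - q - q^k x)`. -/
lemma star (β : ℕ → R)
    (hfe : Agf β = PowerSeries.C RatFunc.X * (exp R * rescale RatFunc.X (Agf β))
      + (PowerSeries.C (1 - RatFunc.X) - PowerSeries.X)) (N : ℕ) :
    Agf β = PowerSeries.C (RatFunc.X ^ N) *
        (rescale (qI N) (exp R) * rescale (RatFunc.X ^ N) (Agf β))
      + ∑ k ∈ Finset.range N, PowerSeries.C (RatFunc.X ^ k) *
          (rescale (qI k) (exp R) *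
            (PowerSeries.C (1 - RatFunc.X) - PowerSeries.C (RatFunc.X ^ k) * PowerSeries.X)) := by
  induction N with
  | zero =>
      have h1 : qI 0 = 0 := rfl
      rw [h1]
      simp [rescale_zero, rescale_one]
  | succ N ih =>
      rw [Finset.sum_range_succ]
      have key : rescale (RatFunc.X ^ N) (Agf β)
          = PowerSeries.C RatFunc.X *
              (rescale (RatFunc.X ^ N) (exp R) * rescale (RatFunc.X ^ (N+1)) (Agf β))
            + (PowerSeries.C (1 - RatFunc.X) - PowerSeries.C (RatFunc.X ^ N) * PowerSeries.X) := by
        conv_lhs => rw [hfe]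
        rw [map_add, map_sub, map_mul, map_mul, rescale_C', rescale_C', rescale_X',
          rescale_rescale]
        ring_nf
      have hE : rescale (qI N) (exp R) * rescale (RatFunc.X ^ N) (exp R)
          = rescale (qI (N+1)) (exp R) := by
        rw [exp_mul_exp_eq_exp_add, show qI N + RatFunc.X ^ N = qI (N+1) from
          (Finset.sum_range_succ _ _).symm]
      have hCX : PowerSeries.C (RatFunc.X ^ N : R) * PowerSeries.C RatFunc.X
          = PowerSeries.C (RatFunc.X ^ (N+1)) := by
        rw [← map_mul, ← pow_succ]
      conv_lhs => rw [ih]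
      rw [key, ← hE, ← hCX]
      ring

/-- rational functions whose Laurent expansion is a power series -/
noncomputable def psR : Subring (LaurentSeries ℚ) := (HahnSeries.ofPowerSeries ℤ ℚ).range

lemma memX : ((RatFunc.X : R) : LaurentSeries ℚ) ∈ psR := by
  rw [RatFunc.coe_X]
  exact ⟨PowerSeries.X, HahnSeries.ofPowerSeries_X⟩

lemma algebraMap_eq_C : (algebraMap ℚ R : ℚ →+* R) = RatFunc.C := by
  apply RingHom.ext_rat

lemma memAlg (c : ℚ) : ((algebraMap ℚ R c : R) : LaurentSeries ℚ) ∈ psR := by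
  rw [show algebraMap ℚ R c = RatFunc.C c by rw [← algebraMap_eq_C], RatFunc.coe_C]
  exact ⟨PowerSeries.C c, HahnSeries.ofPowerSeries_C c⟩

lemma coe_sum {ι : Type*} (s : Finset ι) (f : ι → R) :
    ((∑ i ∈ s, f i : R) : LaurentSeries ℚ) = ∑ i ∈ s, ((f i : R) : LaurentSeries ℚ) := by
  exact map_sum _ _ _

lemma memqI (k : ℕ) : ((qI k : R) : LaurentSeries ℚ) ∈ psR := by
  rw [qI, coe_sum]
  exact Subring.sum_mem _ fun i _ => by rw [RatFunc.coe_pow]; exact pow_mem memX i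

/-- each `β j` expands as a power series at `q = 0` -/
lemma memβ (β : ℕ → R) (h0 : β 0 = 1)
    (hrec : ∀ m : ℕ, 1 ≤ m →
      RatFunc.X * (∑ i ∈ Finset.range (m + 1), (m.choose i : R) * RatFunc.X ^ i * β i)
        - β m = if m = 1 then 1 else 0) :
    ∀ j, ((β j : R) : LaurentSeries ℚ) ∈ psR := by
  intro j
  induction j using Nat.strong_induction_on with
  | _ m ih =>
    rcases Nat.eq_zero_or_pos m with rfl | hm
    · rw [h0, RatFunc.coe_one]; exact one_mem _
    · have hr := hrec m hm
      rw [Finset.sum_range_succ] at hr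
      have key : β m * (1 - RatFunc.X ^ (m+1))
          = RatFunc.X * (∑ i ∈ Finset.range m, (m.choose i : R) * RatFunc.X ^ i * β i)
            - (if m = 1 then 1 else 0) := by
        rw [← hr]
        simp only [Nat.choose_self, Nat.cast_one]
        ring
      have hS : ((RatFunc.X * (∑ i ∈ Finset.range m, (m.choose i : R) * RatFunc.X ^ i * β i)
            - (if m = 1 then 1 else 0) : R) : LaurentSeries ℚ) ∈ psR := by
        rw [RatFunc.coe_sub, RatFunc.coe_mul, coe_sum]
        refine sub_mem (mul_mem memX (Subring.sum_mem _ fun i hi => ?_)) ?_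
        · rw [RatFunc.coe_mul, RatFunc.coe_mul, RatFunc.coe_pow]
          refine mul_mem (mul_mem ?_ (pow_mem memX i)) (ih i (Finset.mem_range.mp hi))
          rw [show ((m.choose i : R) : LaurentSeries ℚ) = ((m.choose i : ℕ) : LaurentSeries ℚ)
            from map_natCast _ _]
          exact natCast_mem _ _
        · split
          · rw [RatFunc.coe_one]; exact one_mem _
          · rw [RatFunc.coe_zero]; exact zero_mem _
      obtain ⟨P, hP⟩ := hS
      set p : PowerSeries ℚ := 1 - PowerSeries.X ^ (m+1) with hp
      have hcu : constantCoeff p = ((1 : ℚˣ) : ℚ) := by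
        simp [hp]
      have hu : p * PowerSeries.invOfUnit p 1 = 1 := PowerSeries.mul_invOfUnit p 1 hcu
      have hcoe : ((1 - RatFunc.X ^ (m+1) : R) : LaurentSeries ℚ)
          = HahnSeries.ofPowerSeries ℤ ℚ p := by
        rw [hp]
        rw [map_sub, map_one, map_pow, map_sub, map_one, map_pow, HahnSeries.ofPowerSeries_X,
          RatFunc.coe_X]
      have hfin : ((β m : R) : LaurentSeries ℚ)
          = HahnSeries.ofPowerSeries ℤ ℚ (P * PowerSeries.invOfUnit p 1) := by
        have h2 : ((β m : R) : LaurentSeries ℚ) * HahnSeries.ofPowerSeries ℤ ℚ p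
            = HahnSeries.ofPowerSeries ℤ ℚ P := by
          rw [← hcoe, ← RatFunc.coe_mul, key, hP]
        calc ((β m : R) : LaurentSeries ℚ)
            = ((β m : R) : LaurentSeries ℚ) *
              (HahnSeries.ofPowerSeries ℤ ℚ p * HahnSeries.ofPowerSeries ℤ ℚ
                (PowerSeries.invOfUnit p 1)) := by
              rw [← map_mul, hu, map_one, mul_one]
          _ = HahnSeries.ofPowerSeries ℤ ℚ P * HahnSeries.ofPowerSeries ℤ ℚ
                (PowerSeries.invOfUnit p 1) := by rw [← mul_assoc, h2]
          _ = _ := by rw [← map_mul]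
      exact ⟨_, hfin.symm⟩

/-- the `k`-th carlitz summand polynomial -/
noncomputable def Pk (n k : ℕ) : Polynomial ℚ :=
  Polynomial.X ^ k * qIntP k ^ (n - 1)
    - ((n : Polynomial ℚ) + 1) * Polynomial.X ^ (2 * k) * qIntP k ^ (n - 1)

lemma geom (k : ℕ) : (1 - Polynomial.X) * qIntP k = 1 - Polynomial.X ^ k := by
  have h := geom_sum_mul (Polynomial.X : Polynomial ℚ) k
  rw [qIntP]
  linear_combination -h

lemma polyId (n k : ℕ) (hn : 2 ≤ n) :
    Polynomial.X ^ k * ((1 - Polynomial.X) * qIntP k ^ n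
        - (n : Polynomial ℚ) * Polynomial.X ^ k * qIntP k ^ (n - 1))
      = Pk n k := by
  obtain ⟨m, rfl⟩ := Nat.exists_eq_add_of_le hn
  have h1 : 2 + m - 1 = m + 1 := by omega
  rw [Pk, h1, show 2 + m = (m + 1) + 1 by omega, pow_succ]
  push_cast
  linear_combination (Polynomial.X ^ k * qIntP k ^ (m + 1)) * geom k

lemma ratId (n k : ℕ) (hn : 2 ≤ n) :
    RatFunc.X ^ k * ((1 - RatFunc.X) * qI k ^ n
        - (n : R) * RatFunc.X ^ k * qI k ^ (n - 1))
      = algebraMap (Polynomial ℚ) R (Pk n k) := by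
  have hq : ∀ j : ℕ, algebraMap (Polynomial ℚ) R (qIntP j) = qI j := by
    intro j
    rw [qIntP, qI, map_sum]
    exact Finset.sum_congr rfl fun i _ => by rw [map_pow, RatFunc.algebraMap_X]
  rw [← polyId n k hn]
  simp only [map_mul, map_sub, map_pow, map_one, map_natCast, RatFunc.algebraMap_X, hq]

lemma coeffPS (p : PowerSeries ℚ) (D : ℕ) :
    (HahnSeries.ofPowerSeries ℤ ℚ p).coeff (D : ℤ) = PowerSeries.coeff D p :=
  HahnSeries.ofPowerSeries_apply_coeff p D

lemma coeffPS_neg (p : PowerSeries ℚ) (d : ℤ) (hd : d < 0) :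
    (HahnSeries.ofPowerSeries ℤ ℚ p).coeff d = 0 := by
  rw [show (HahnSeries.ofPowerSeries ℤ ℚ p : LaurentSeries ℚ) = (p : LaurentSeries ℚ) from rfl,
    PowerSeries.coeff_coe, if_pos hd]

lemma coeff_mul_X (f : PowerSeries R) (n : ℕ) (hn : 1 ≤ n) :
    PowerSeries.coeff n (f * PowerSeries.X) = PowerSeries.coeff (n - 1) f := by
  conv_lhs => rw [show n = (n - 1) + 1 by omega]
  exact coeff_succ_mul_X _ _

end BC

/-- for `n ≥ 2`, the Bernoulli–Carlitz fraction `β_n`, expanded as a (Laurent)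
series at `q = 0`, equals `Σ_{k≥1} q^k [k]^{n-1} − (n+1) Σ_{k≥1} q^{2k} [k]^{n-1}`. -/
theorem bernoulliCarlitz_series (β : ℕ → RatFunc ℚ) (h0 : β 0 = 1)
    (hrec : ∀ m : ℕ, 1 ≤ m →
      RatFunc.X * (∑ i ∈ Finset.range (m + 1), (m.choose i : RatFunc ℚ) * RatFunc.X ^ i * β i)
        - β m = if m = 1 then 1 else 0)
    (n : ℕ) (hn : 2 ≤ n) :
    (β n : LaurentSeries ℚ) = ((carlitzSeries n : PowerSeries ℚ) : LaurentSeries ℚ) := by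
  have hfe := BC.funEq β h0 hrec
  -- the finite-stage identity with remainder, for every N
  have hI : ∀ N : ℕ, ∃ Rem : RatFunc ℚ, ((Rem : LaurentSeries ℚ) ∈ BC.psR) ∧
      β n = RatFunc.X ^ N * Rem + ∑ k ∈ Finset.range N,
        RatFunc.X ^ k * ((1 - RatFunc.X) * BC.qI k ^ n
          - (n : RatFunc ℚ) * RatFunc.X ^ k * BC.qI k ^ (n - 1)) := by
    intro N
    have hstar := BC.star β hfe N
    have hc := congrArg (PowerSeries.coeff n) hstar
    rw [map_add, PowerSeries.coeff_C_mul, map_sum] at hc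
    have hper : ∀ k : ℕ,
        PowerSeries.coeff n (PowerSeries.C (RatFunc.X ^ k) *
          (rescale (BC.qI k) (PowerSeries.exp _) *
            (PowerSeries.C (1 - RatFunc.X)
              - PowerSeries.C (RatFunc.X ^ k) * PowerSeries.X)))
        = RatFunc.X ^ k * ((1 - RatFunc.X) *
              (BC.qI k ^ n * algebraMap ℚ _ (1 / (n.factorial : ℚ)))
            - RatFunc.X ^ k *
              (BC.qI k ^ (n-1) * algebraMap ℚ _ (1 / ((n-1).factorial : ℚ)))) := by
      intro k
      rw [PowerSeries.coeff_C_mul]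
      congr 1
      rw [mul_sub, map_sub]
      congr 1
      · rw [show rescale (BC.qI k) (PowerSeries.exp _) * PowerSeries.C (1 - RatFunc.X)
            = PowerSeries.C (1 - RatFunc.X) * rescale (BC.qI k) (PowerSeries.exp _)
            from mul_comm _ _,
          PowerSeries.coeff_C_mul, PowerSeries.coeff_rescale, PowerSeries.coeff_exp]
      · rw [show rescale (BC.qI k) (PowerSeries.exp _) *
              (PowerSeries.C (RatFunc.X ^ k) * PowerSeries.X)
            = PowerSeries.C (RatFunc.X ^ k) *
              (rescale (BC.qI k) (PowerSeries.exp _) * PowerSeries.X) from by ring,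
          PowerSeries.coeff_C_mul, BC.coeff_mul_X _ n (by omega),
          PowerSeries.coeff_rescale, PowerSeries.coeff_exp]
    rw [Finset.sum_congr rfl fun k _ => hper k] at hc
    rw [show PowerSeries.coeff n (BC.Agf β)
      = algebraMap ℚ _ ((n.factorial : ℚ)⁻¹) * β n from PowerSeries.coeff_mk _ _] at hc
    set Rem0 : RatFunc ℚ := PowerSeries.coeff n
      (rescale (BC.qI N) (PowerSeries.exp _) * rescale (RatFunc.X ^ N) (BC.Agf β)) with hRem0
    have hR : Rem0 = ∑ p ∈ (Finset.HasAntidiagonal.antidiagonal n : Finset (ℕ × ℕ)),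
        (BC.qI N ^ p.1 * algebraMap ℚ _ (1 / (p.1.factorial : ℚ))) *
          ((RatFunc.X ^ N) ^ p.2 *
            (algebraMap ℚ _ ((p.2.factorial : ℚ)⁻¹) * β p.2)) := by
      rw [hRem0, PowerSeries.coeff_mul]
      exact Finset.sum_congr rfl fun p _ => by
        rw [PowerSeries.coeff_rescale, PowerSeries.coeff_rescale, PowerSeries.coeff_exp,
          BC.Agf, PowerSeries.coeff_mk]
    refine ⟨algebraMap ℚ _ (n.factorial : ℚ) * Rem0, ?_, ?_⟩
    · rw [RatFunc.coe_mul, hR, BC.coe_sum]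
      refine mul_mem (BC.memAlg _) (Subring.sum_mem _ fun p _ => ?_)
      rw [RatFunc.coe_mul, RatFunc.coe_mul, RatFunc.coe_mul, RatFunc.coe_mul, RatFunc.coe_pow,
        RatFunc.coe_pow, RatFunc.coe_pow]
      exact mul_mem (mul_mem (pow_mem (BC.memqI N) _) (BC.memAlg _))
        (mul_mem (pow_mem (pow_mem BC.memX N) _)
          (mul_mem (BC.memAlg _) (BC.memβ β h0 hrec p.2)))
    · have hfacne : (n.factorial : ℚ) ≠ 0 := Nat.cast_ne_zero.mpr n.factorial_ne_zero
      have hfac1 : algebraMap ℚ (RatFunc ℚ) (n.factorial : ℚ)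
          * algebraMap ℚ (RatFunc ℚ) (1 / (n.factorial : ℚ)) = 1 := by
        rw [← map_mul, mul_one_div_cancel hfacne, map_one]
      have hfac2 : algebraMap ℚ (RatFunc ℚ) (n.factorial : ℚ)
          * algebraMap ℚ (RatFunc ℚ) (1 / ((n-1).factorial : ℚ)) = (n : RatFunc ℚ) := by
        rw [← map_mul]
        have hq : (n.factorial : ℚ) * (1 / ((n-1).factorial : ℚ)) = (n : ℚ) := by
          rw [show n.factorial = n * (n-1).factorial by
            conv_lhs => rw [show n = (n - 1) + 1 by omega]
            rw [Nat.factorial_succ]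
            congr 1; omega]
          push_cast
          field_simp
        rw [hq, map_natCast]
      calc β n = algebraMap ℚ (RatFunc ℚ) (n.factorial : ℚ) *
            (algebraMap ℚ (RatFunc ℚ) ((n.factorial : ℚ)⁻¹) * β n) := by
            rw [← mul_assoc, ← map_mul, mul_inv_cancel₀ hfacne, map_one, one_mul]
        _ = algebraMap ℚ (RatFunc ℚ) (n.factorial : ℚ) *
            (RatFunc.X ^ N * Rem0 + ∑ k ∈ Finset.range N,
              RatFunc.X ^ k * ((1 - RatFunc.X) *
                  (BC.qI k ^ n * algebraMap ℚ _ (1 / (n.factorial : ℚ)))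
                - RatFunc.X ^ k *
                  (BC.qI k ^ (n-1) * algebraMap ℚ _ (1 / ((n-1).factorial : ℚ))))) := by
            rw [hc]
        _ = RatFunc.X ^ N * (algebraMap ℚ _ (n.factorial : ℚ) * Rem0)
            + ∑ k ∈ Finset.range N,
              RatFunc.X ^ k * ((1 - RatFunc.X) * BC.qI k ^ n
                - (n : RatFunc ℚ) * RatFunc.X ^ k * BC.qI k ^ (n - 1)) := by
            rw [mul_add, Finset.mul_sum]
            congr 1
            · ring
            · refine Finset.sum_congr rfl fun k _ => ?_
              linear_combination (RatFunc.X ^ k * (1 - RatFunc.X) * BC.qI k ^ n) * hfac1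
                - (RatFunc.X ^ k * RatFunc.X ^ k * BC.qI k ^ (n-1)) * hfac2
  -- now compare coefficients
  apply HahnSeries.coeff_injective
  funext d
  rcases lt_or_ge d 0 with hd | hd
  · obtain ⟨P, hP⟩ := BC.memβ β h0 hrec n
    rw [← hP, BC.coeffPS_neg _ _ hd,
      show ((carlitzSeries n : PowerSeries ℚ) : LaurentSeries ℚ)
        = HahnSeries.ofPowerSeries ℤ ℚ (carlitzSeries n) from rfl, BC.coeffPS_neg _ _ hd]
  · obtain ⟨D, rfl⟩ : ∃ D : ℕ, d = (D : ℤ) := ⟨d.toNat, (Int.toNat_of_nonneg hd).symm⟩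
    obtain ⟨Rem, hmem, hId⟩ := hI (D + 1)
    obtain ⟨Prem, hPrem⟩ := hmem
    have hL : ((β n : RatFunc ℚ) : LaurentSeries ℚ).coeff (D : ℤ)
        = ∑ k ∈ Finset.range (D + 1), (BC.Pk n k).coeff D := by
      rw [hId, RatFunc.coe_add, HahnSeries.coeff_add]
      have h1 : ((RatFunc.X ^ (D+1) * Rem : RatFunc ℚ) : LaurentSeries ℚ).coeff (D : ℤ)
          = 0 := by
        rw [RatFunc.coe_mul, RatFunc.coe_pow, RatFunc.coe_X, ← hPrem,
          ← HahnSeries.ofPowerSeries_X, ← map_pow, ← map_mul, BC.coeffPS]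
        exact (PowerSeries.X_pow_dvd_iff.mp (Dvd.intro Prem rfl)) D (by omega)
      have h2 : ((∑ k ∈ Finset.range (D+1),
            RatFunc.X ^ k * ((1 - RatFunc.X) * BC.qI k ^ n
              - (n : RatFunc ℚ) * RatFunc.X ^ k * BC.qI k ^ (n-1)) : RatFunc ℚ) :
            LaurentSeries ℚ).coeff (D : ℤ)
          = ∑ k ∈ Finset.range (D + 1), (BC.Pk n k).coeff D := by
        rw [BC.coe_sum]
        rw [show (∑ k ∈ Finset.range (D+1),
            ((RatFunc.X ^ k * ((1 - RatFunc.X) * BC.qI k ^ n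
              - (n : RatFunc ℚ) * RatFunc.X ^ k * BC.qI k ^ (n-1)) : RatFunc ℚ) :
              LaurentSeries ℚ)).coeff (D : ℤ)
          = ∑ k ∈ Finset.range (D+1),
            ((RatFunc.X ^ k * ((1 - RatFunc.X) * BC.qI k ^ n
              - (n : RatFunc ℚ) * RatFunc.X ^ k * BC.qI k ^ (n-1)) : RatFunc ℚ) :
              LaurentSeries ℚ).coeff (D : ℤ)
          from map_sum (HahnSeries.coeff.addMonoidHom (D : ℤ)) _ _]
        refine Finset.sum_congr rfl fun k _ => ?_
        rw [BC.ratId n k hn,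
          show ((algebraMap (Polynomial ℚ) (RatFunc ℚ) (BC.Pk n k) : RatFunc ℚ) :
              LaurentSeries ℚ)
            = HahnSeries.ofPowerSeries ℤ ℚ ((BC.Pk n k : Polynomial ℚ) : PowerSeries ℚ)
          from (RatFunc.coe_coe _).symm, BC.coeffPS, Polynomial.coeff_coe]
      rw [h1, h2, zero_add]
    have hR : (((carlitzSeries n : PowerSeries ℚ)) : LaurentSeries ℚ).coeff (D : ℤ)
        = ∑ k ∈ Finset.Icc 1 D, (BC.Pk n k).coeff D := by
      rw [show (((carlitzSeries n : PowerSeries ℚ)) : LaurentSeries ℚ)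
        = HahnSeries.ofPowerSeries ℤ ℚ (carlitzSeries n) from rfl, BC.coeffPS,
        carlitzSeries, PowerSeries.coeff_mk]
      rfl
    rw [hL, hR]
    symm
    refine Finset.sum_subset ?_ ?_
    · intro x hx
      simp only [Finset.mem_Icc, Finset.mem_range] at hx ⊢
      omega
    · intro x hx hnx
      have hx0 : x = 0 := by
        simp only [Finset.mem_Icc, Finset.mem_range, not_and, not_le] at hx hnx
        omega
      subst hx0
      have : BC.Pk n 0 = 0 := by
        have h0' : qIntP 0 = 0 := rfl
        rw [BC.Pk, h0', zero_pow (by omega : n - 1 ≠ 0)]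
        ring
      rw [this, Polynomial.coeff_zero]
end

section
/- For n ≥ 2, β_n = ζ_q(1−n)(q − (n+1)q²), where ζ_q(s) = Σ_{m≥1} F_m/[m]^s; explicitly, β_n = Σ_{m≥1} [m]^{n−1} (q^m − (n+1) q^{2m}) as formal power series in q. -/
open PowerSeries
open Finset

/-- The quantum integer `[m] = 1 + q + ⋯ + q^{m-1}` as a power series over `ℚ`. -/
noncomputable def qIntPS (m : ℕ) : PowerSeries ℚ := ∑ i ∈ Finset.range m, (X : PowerSeries ℚ) ^ i

/-- The formal Frobenius `F_m : f(q) ↦ f(q^m)` on power series. -/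
noncomputable def frobPS (m : ℕ) (f : PowerSeries ℚ) : PowerSeries ℚ :=
  PowerSeries.mk fun k => if m ∣ k then coeff (k / m) f else 0

/-- The operator `ζ_q(1−n) = Σ_{m≥1} [m]^{n-1} F_m` (the Riemann `ζ_q` operator at the
nonpositive integer `s = 1 − n`), acting on series without constant term; the `k`-th
coefficient involves only the terms with `m ≤ k`. -/
noncomputable def zetaQNeg (n : ℕ) (f : PowerSeries ℚ) : PowerSeries ℚ :=
  PowerSeries.mk fun k =>
    coeff k (∑ m ∈ Finset.Icc 1 k, qIntPS m ^ (n - 1) * frobPS m f)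

noncomputable def geomDiv (a : ℕ) : PowerSeries ℚ :=
  PowerSeries.mk fun k => if a ∣ k ∧ k ≠ 0 then 1 else 0

noncomputable def yy : LaurentSeries ℚ := ((PowerSeries.X : PowerSeries ℚ) : LaurentSeries ℚ)
noncomputable def DD (a : ℕ) : LaurentSeries ℚ := (1 - yy^a)⁻¹
noncomputable def sK (i : ℕ) : LaurentSeries ℚ :=
  ∑ k ∈ range (i+1),
    (-1:LaurentSeries ℚ)^k * ((k:LaurentSeries ℚ)+1) * ((i.choose k : ℕ) : LaurentSeries ℚ)
      * DD (k+1)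

lemma frob_eval (m : ℕ) (hm : 1 ≤ m) (c : ℚ) :
    frobPS m (X - C c * X ^ 2) = X ^ m - C c * X ^ (2 * m) := by
  ext k
  simp only [frobPS, coeff_mk, map_sub, coeff_X, coeff_C_mul, coeff_X_pow]
  by_cases h : m ∣ k
  · obtain ⟨t, rfl⟩ := h
    simp only [if_pos (Dvd.intro t rfl)]
    rw [Nat.mul_div_cancel_left t hm]
    have h1 : (m * t = m) ↔ (t = 1) := by
      constructor
      · intro h; nlinarith [Nat.eq_of_mul_eq_mul_left hm (h.trans (mul_one m).symm)]
      · rintro rfl; ring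
    have h2 : (m * t = 2 * m) ↔ (t = 2) := by
      constructor
      · intro h; exact Nat.eq_of_mul_eq_mul_left hm (by omega)
      · rintro rfl; ring
    simp [h1, h2]
  · rw [if_neg h]
    have h1 : ¬ (k = m) := by rintro rfl; exact h dvd_rfl
    have h2 : ¬ (k = 2 * m) := by rintro rfl; exact h ⟨2, by ring⟩
    simp [h1, h2]

lemma qInt_mul (m : ℕ) : qIntPS m * (1 - X) = 1 - X ^ m := by
  have := geom_sum_mul (X : PowerSeries ℚ) m
  unfold qIntPS
  linear_combination -this


lemma geomDiv_mul (a : ℕ) (ha : 1 ≤ a) : (1 - X ^ a) * geomDiv a = X ^ a := by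
  have key : geomDiv a - X ^ a * geomDiv a = X ^ a := by
    ext k
    rw [map_sub, coeff_X_pow_mul']
    simp only [geomDiv, coeff_mk, coeff_X_pow]
    by_cases hk : a ≤ k
    · rw [if_pos hk]
      by_cases h : k = a
      · have e0 : k - a = 0 := by omega
        rw [if_pos ⟨h ▸ dvd_rfl, by omega⟩, e0, if_neg (by simp), if_pos h]; ring
      · have : (a ∣ k ∧ k ≠ 0) ↔ (a ∣ k - a ∧ k - a ≠ 0) := by
          constructor
          · rintro ⟨hd, hk0⟩
            exact ⟨Nat.dvd_sub hd dvd_rfl, fun h0 => h (by omega)⟩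
          · rintro ⟨hd, hk0⟩
            have : a ∣ k := by
              have h2 := Nat.dvd_add hd (dvd_refl a)
              rwa [Nat.sub_add_cancel hk] at h2
            exact ⟨this, by omega⟩
        rw [if_congr this rfl rfl, if_neg h]; ring
    · have h1 : ¬ (k = a) := by omega
      have h2 : ¬ (a ∣ k ∧ k ≠ 0) := by
        rintro ⟨⟨t, rfl⟩, h0⟩
        have : 1 ≤ t := Nat.pos_of_ne_zero (by rintro rfl; simp at h0)
        nlinarith
      simp [h1, h2, hk]
  linear_combination key

lemma coeff_term_zero (g : PowerSeries ℚ) (c : ℚ) (m j : ℕ) (h : j < m) :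
    coeff j (g * ((X:PowerSeries ℚ) ^ m - C c * X ^ (2*m))) = 0 := by
  have e : g * ((X:PowerSeries ℚ) ^ m - C c * X ^ (2*m))
      = X ^ m * (g * (1 - C c * X ^ m)) := by
    rw [two_mul, pow_add]; ring
  rw [e, coeff_X_pow_mul', if_neg (by omega)]

lemma zeta_coeff (n k K : ℕ) (hK : k ≤ K) (c : ℚ) :
    coeff k (zetaQNeg n (X - C c * X ^ 2)) =
      coeff k (∑ m ∈ Finset.Icc 1 K, qIntPS m ^ (n-1) * ((X:PowerSeries ℚ) ^ m - C c * X ^ (2*m))) := by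
  rw [zetaQNeg, coeff_mk]
  rw [Finset.sum_congr rfl (fun m hm => by
    rw [frob_eval m (Finset.mem_Icc.mp hm).1 c])]
  rw [map_sum, map_sum]
  apply Finset.sum_subset (Finset.Icc_subset_Icc_right hK)
  intro m hm hnot
  have h1 : 1 ≤ m := (Finset.mem_Icc.mp hm).1
  have h2 : k < m := by
    rcases Finset.mem_Icc.mp hm with ⟨_, _⟩
    by_contra h
    exact hnot (Finset.mem_Icc.mpr ⟨h1, by omega⟩)
  exact coeff_term_zero _ c m k h2

lemma sum_geom_coeff (a k : ℕ) (ha : 1 ≤ a) :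
    (∑ m ∈ Finset.Icc 1 k, coeff k ((X:PowerSeries ℚ)^(a*m))) = coeff k (geomDiv a) := by
  simp only [coeff_X_pow, geomDiv, coeff_mk]
  by_cases h : a ∣ k ∧ k ≠ 0
  · obtain ⟨⟨t, rfl⟩, h0⟩ := h
    rw [if_pos ⟨⟨t, rfl⟩, h0⟩]
    have ht1 : 1 ≤ t := Nat.pos_of_ne_zero (by rintro rfl; simp at h0)
    have htm : t ∈ Finset.Icc 1 (a*t) := Finset.mem_Icc.mpr ⟨ht1, Nat.le_mul_of_pos_left t ha⟩
    rw [Finset.sum_eq_single_of_mem t htm]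
    · rw [if_pos rfl]
    · intro m _ hne
      rw [if_neg]
      intro he
      exact hne (Nat.eq_of_mul_eq_mul_left ha he.symm)
  · rw [if_neg h]
    apply Finset.sum_eq_zero
    intro m hm
    rw [if_neg]
    intro he
    have h1 : 1 ≤ m := (Finset.mem_Icc.mp hm).1
    exact h ⟨⟨m, he⟩, by subst he; positivity⟩

lemma main1 (d : ℕ) (c : ℚ) :
    zetaQNeg (d+1) (X - C c * X^2) * (1 - X)^d
      = ∑ j ∈ Finset.range (d+1),
          ((-1:ℚ)^j * (d.choose j)) • (geomDiv (j+1) - C c * geomDiv (j+2)) := by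
  ext k
  -- LHS coefficient via truncated sum
  have hL : coeff k (zetaQNeg (d+1) (X - C c * X^2) * (1 - X)^d)
      = coeff k ((∑ m ∈ Finset.Icc 1 k, qIntPS m ^ d * ((X:PowerSeries ℚ) ^ m - C c * X ^ (2*m))) * (1 - X)^d) := by
    rw [coeff_mul, coeff_mul]
    apply Finset.sum_congr rfl
    intro p hp
    have hp1 : p.1 ≤ k := by
      have := Finset.HasAntidiagonal.mem_antidiagonal.mp hp; omega
    rw [zeta_coeff (d+1) p.1 k hp1 c]
    simp
  rw [hL]
  -- rearrange the product
  have hS : (∑ m ∈ Finset.Icc 1 k, qIntPS m ^ d * ((X:PowerSeries ℚ) ^ m - C c * X ^ (2*m))) * (1 - X)^d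
      = ∑ m ∈ Finset.Icc 1 k, ∑ j ∈ Finset.range (d+1),
          ((-1:ℚ)^j * (d.choose j)) • ((X:PowerSeries ℚ)^((j+1)*m) - C c * X^((j+2)*m)) := by
    rw [Finset.sum_mul]
    apply Finset.sum_congr rfl
    intro m _
    have e1 : qIntPS m ^ d * ((X:PowerSeries ℚ) ^ m - C c * X ^ (2*m)) * (1-X)^d
        = (1 - (X:PowerSeries ℚ)^m)^d * ((X:PowerSeries ℚ) ^ m - C c * X ^ (2*m)) := by
      rw [← qInt_mul m, mul_pow]; ring
    rw [e1]
    have e2 : (1 - (X:PowerSeries ℚ)^m)^d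
        = ∑ j ∈ Finset.range (d+1), ((-1:ℚ)^j * (d.choose j)) • (X:PowerSeries ℚ)^(m*j) := by
      have := add_pow (-(X:PowerSeries ℚ)^m) 1 d
      rw [show (1 : PowerSeries ℚ) - X^m = -(X:PowerSeries ℚ)^m + 1 by ring, this]
      apply Finset.sum_congr rfl
      intro j _
      rw [one_pow, mul_one, neg_pow, ← pow_mul, smul_eq_C_mul, map_mul, map_pow, map_neg,
        map_one]
      push_cast
      rw [map_natCast]
      ring
    rw [e2, Finset.sum_mul]
    apply Finset.sum_congr rfl
    intro j _
    rw [smul_mul_assoc]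
    congr 1
    rw [mul_sub,
      show (j+1)*m = m*j + m from by ring, show (j+2)*m = m*j + 2*m from by ring,
      pow_add, pow_add]
    ring
  rw [hS]
  rw [Finset.sum_comm]
  rw [map_sum, map_sum]
  apply Finset.sum_congr rfl
  intro j _
  rw [map_sum]
  simp only [coeff_smul, map_sub, coeff_C_mul, smul_eq_mul]
  rw [← Finset.mul_sum]
  congr 1
  rw [Finset.sum_sub_distrib, ← Finset.mul_sum]
  rw [sum_geom_coeff (j+1) k (by omega), sum_geom_coeff (j+2) k (by omega)]

lemma one_sub_yy_pow_ne (a : ℕ) (ha : 1 ≤ a) : (1:LaurentSeries ℚ) - yy^a ≠ 0 := by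
  rw [yy, ← PowerSeries.coe_pow, ← PowerSeries.coe_one, ← PowerSeries.coe_sub]
  intro h
  rw [show (0 : LaurentSeries ℚ) = ((0 : PowerSeries ℚ) : LaurentSeries ℚ) from
    PowerSeries.coe_zero.symm] at h
  have h2 := HahnSeries.ofPowerSeries_injective h
  have h3 := congrArg (PowerSeries.constantCoeff) h2
  simp only [map_sub, map_one, map_zero, map_pow, constantCoeff_X] at h3
  rw [zero_pow (by omega)] at h3
  norm_num at h3

lemma DD_mul (a : ℕ) (ha : 1 ≤ a) : (1 - yy^a) * DD a = 1 :=
  mul_inv_cancel₀ (one_sub_yy_pow_ne a ha)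

lemma DD_shift (k : ℕ) : yy^(k+1) * DD (k+1) = DD (k+1) - 1 := by
  have h := DD_mul (k+1) (by omega)
  linear_combination -h

lemma alt1 (m : ℕ) (hm : 1 ≤ m) :
    ∑ k ∈ range (m+1), (-1:LaurentSeries ℚ)^k * (m.choose k : LaurentSeries ℚ) = 0 := by
  have h := Int.alternating_sum_range_choose_of_ne (show m ≠ 0 by omega)
  have h2 : ((∑ i ∈ range (m+1), (-1:ℤ)^i * (m.choose i) : ℤ) : LaurentSeries ℚ) = 0 := by
    rw [h]; simp
  push_cast at h2
  exact h2

lemma alt2 (m : ℕ) (hm : 2 ≤ m) :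
    ∑ k ∈ range (m+1), (-1:LaurentSeries ℚ)^k * ((k:LaurentSeries ℚ)+1) *
      (m.choose k : LaurentSeries ℚ) = 0 := by
  obtain ⟨m', rfl⟩ : ∃ m', m = m' + 2 := ⟨m - 2, by omega⟩
  have split : ∀ k : ℕ, (-1:LaurentSeries ℚ)^k * ((k:LaurentSeries ℚ)+1) * ((m'+2).choose k : LaurentSeries ℚ)
      = (-1)^k * (k:LaurentSeries ℚ) * ((m'+2).choose k) + (-1)^k * ((m'+2).choose k) := by
    intro k; ring
  rw [Finset.sum_congr rfl (fun k _ => split k), Finset.sum_add_distrib,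
    alt1 (m'+2) (by omega), add_zero]
  rw [Finset.sum_range_succ']
  simp only [Nat.cast_zero, zero_add, mul_zero, zero_mul, add_zero]
  have term : ∀ j : ℕ, (-1:LaurentSeries ℚ)^(j+1) * ((j+1:ℕ):LaurentSeries ℚ) * ((m'+2).choose (j+1) : LaurentSeries ℚ)
      = -((m'+2) : LaurentSeries ℚ) * ((-1)^j * ((m'+1).choose j : LaurentSeries ℚ)) := by
    intro j
    have hn : (m'+2) * (m'+1).choose j = (m'+2).choose (j+1) * (j+1) := by
      have := Nat.add_one_mul_choose_eq (m'+1) j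
      simpa using this
    have hc : ((m'+2) : LaurentSeries ℚ) * ((m'+1).choose j : LaurentSeries ℚ)
        = ((m'+2).choose (j+1) : LaurentSeries ℚ) * ((j:LaurentSeries ℚ)+1) := by
      exact_mod_cast congrArg (fun t : ℕ => (t : LaurentSeries ℚ)) hn
    push_cast
    push_cast at hc
    linear_combination (-1:LaurentSeries ℚ)^j * hc
  rw [Finset.sum_congr rfl (fun j _ => term j)]
  rw [← Finset.mul_sum, alt1 (m'+1) (by omega), mul_zero]


lemma inner_eq (m : ℕ) :
    (∑ i ∈ range (m+1), ((m.choose i : ℕ) : LaurentSeries ℚ) * yy^i * (1-yy)^(m-i) * sK i)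
      = ∑ k ∈ range (m+1), (-1:LaurentSeries ℚ)^k * ((k:LaurentSeries ℚ)+1)
          * ((m.choose k : ℕ) : LaurentSeries ℚ) * (yy^k * DD (k+1)) := by
  have e1 : ∀ i ∈ range (m+1),
      ((m.choose i : ℕ) : LaurentSeries ℚ) * yy^i * (1-yy)^(m-i) * sK i
        = ∑ k ∈ range (i+1),
            (-1:LaurentSeries ℚ)^k * ((k:LaurentSeries ℚ)+1)
              * (((m.choose i) * (i.choose k) : ℕ) : LaurentSeries ℚ)
              * (yy^i * (1-yy)^(m-i) * DD (k+1)) := by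
    intro i _
    rw [sK, Finset.mul_sum]
    apply Finset.sum_congr rfl
    intro k _
    push_cast
    ring
  rw [Finset.sum_congr rfl e1]
  simp only [Finset.range_eq_Ico]
  rw [← Finset.sum_Ico_Ico_comm 0 (m+1) (fun k i =>
    (-1:LaurentSeries ℚ)^k * ((k:LaurentSeries ℚ)+1)
      * (((m.choose i) * (i.choose k) : ℕ) : LaurentSeries ℚ)
      * (yy^i * (1-yy)^(m-i) * DD (k+1)))]
  apply Finset.sum_congr rfl
  intro k hk
  have hkm : k ≤ m := by
    have := Finset.mem_Ico.mp hk; omega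
  rw [Finset.sum_Ico_eq_sum_range]
  have hrange : m + 1 - k = (m - k) + 1 := by omega
  have e2 : ∀ j ∈ range ((m-k)+1),
      (-1:LaurentSeries ℚ)^k * ((k:LaurentSeries ℚ)+1)
        * (((m.choose (k+j)) * ((k+j).choose k) : ℕ) : LaurentSeries ℚ)
        * (yy^(k+j) * (1-yy)^(m-(k+j)) * DD (k+1))
      = ((-1:LaurentSeries ℚ)^k * ((k:LaurentSeries ℚ)+1)
          * ((m.choose k : ℕ) : LaurentSeries ℚ) * (yy^k * DD (k+1)))
        * (yy^j * (1-yy)^((m-k)-j) * (((m-k).choose j : ℕ) : LaurentSeries ℚ)) := by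
    intro j hj
    have hjm : j ≤ m - k := by
      have := Finset.mem_range.mp hj; omega
    have hchoose : (m.choose (k+j)) * ((k+j).choose k) = m.choose k * ((m-k).choose j) := by
      have := Nat.choose_mul (n := m) (show k ≤ k + j by omega)
      simpa using this
    rw [hchoose]
    have hpow : m - (k+j) = (m-k) - j := by omega
    rw [hpow, pow_add]
    push_cast
    ring
  rw [hrange, Finset.sum_congr rfl e2, ← Finset.mul_sum]
  have e3 : (∑ j ∈ range ((m-k)+1),
      yy^j * (1-yy)^((m-k)-j) * (((m-k).choose j : ℕ) : LaurentSeries ℚ)) = 1 := by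
    have := add_pow yy (1-yy) (m-k)
    rw [show yy + (1-yy) = 1 by ring, one_pow] at this
    rw [← this]
  rw [e3, mul_one]

lemma recK (m : ℕ) (hm : 1 ≤ m) :
    yy * (1 - yy) *
        (∑ i ∈ range (m+1), ((m.choose i : ℕ) : LaurentSeries ℚ) * yy^i * (1-yy)^(m-i) * sK i)
      - (1-yy) * sK m = (if m = 1 then (1:LaurentSeries ℚ) else 0) * (1-yy)^m := by
  rw [inner_eq m, sK]
  rw [Finset.mul_sum, Finset.mul_sum, ← Finset.sum_sub_distrib]
  have e : ∀ k ∈ range (m+1),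
      yy * (1-yy) * ((-1:LaurentSeries ℚ)^k * ((k:LaurentSeries ℚ)+1)
          * ((m.choose k : ℕ) : LaurentSeries ℚ) * (yy^k * DD (k+1)))
        - (1-yy) * ((-1:LaurentSeries ℚ)^k * ((k:LaurentSeries ℚ)+1)
          * ((m.choose k : ℕ) : LaurentSeries ℚ) * DD (k+1))
      = (1-yy) * ((-1:LaurentSeries ℚ)^(k+1) * ((k:LaurentSeries ℚ)+1)
          * ((m.choose k : ℕ) : LaurentSeries ℚ)) := by
    intro k _
    have h := DD_shift k
    have h2 := DD_mul (k+1) (by omega)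
    calc yy * (1-yy) * ((-1:LaurentSeries ℚ)^k * ((k:LaurentSeries ℚ)+1)
          * ((m.choose k : ℕ) : LaurentSeries ℚ) * (yy^k * DD (k+1)))
        - (1-yy) * ((-1:LaurentSeries ℚ)^k * ((k:LaurentSeries ℚ)+1)
          * ((m.choose k : ℕ) : LaurentSeries ℚ) * DD (k+1))
        = (1-yy) * ((-1:LaurentSeries ℚ)^k * ((k:LaurentSeries ℚ)+1)
          * ((m.choose k : ℕ) : LaurentSeries ℚ)) * (yy^(k+1) * DD (k+1) - DD (k+1)) := by
          rw [pow_succ]; ring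
      _ = _ := by rw [h]; ring
  rw [Finset.sum_congr rfl e, ← Finset.mul_sum]
  by_cases hm1 : m = 1
  · subst hm1
    rw [if_pos rfl]
    norm_num [Finset.sum_range_succ]
  · rw [if_neg hm1, zero_mul]
    have e2 : ∀ k : ℕ, (-1:LaurentSeries ℚ)^(k+1) * ((k:LaurentSeries ℚ)+1)
          * ((m.choose k : ℕ) : LaurentSeries ℚ)
        = -((-1:LaurentSeries ℚ)^k * ((k:LaurentSeries ℚ)+1)
            * ((m.choose k : ℕ) : LaurentSeries ℚ)) := by
      intro k; rw [pow_succ]; ring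
    rw [Finset.sum_congr rfl (fun k _ => e2 k), Finset.sum_neg_distrib,
      alt2 m (by omega), neg_zero, mul_zero]

lemma beta_closed (b : ℕ → LaurentSeries ℚ) (hb0 : b 0 = 1)
    (hbrec : ∀ m : ℕ, 1 ≤ m →
      yy * (∑ i ∈ range (m+1), ((m.choose i : ℕ) : LaurentSeries ℚ) * yy^i * b i) - b m
        = if m = 1 then 1 else 0) :
    ∀ m : ℕ, (1-yy)^m * b m = (1-yy) * sK m := by
  intro m
  induction m using Nat.strong_induction_on with
  | _ m IH =>
    rcases Nat.eq_zero_or_pos m with rfl | hm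
    · rw [hb0, sK]
      norm_num
      rw [show (1:LaurentSeries ℚ) - yy = 1 - yy^1 by rw [pow_one]]
      exact (DD_mul 1 le_rfl).symm
    · have hr := hbrec m hm
      have hR := recK m hm
      have hsplit1 : (∑ i ∈ range (m+1), ((m.choose i : ℕ) : LaurentSeries ℚ) * yy^i * b i)
          = (∑ i ∈ range m, ((m.choose i : ℕ) : LaurentSeries ℚ) * yy^i * b i)
            + yy^m * b m := by
        rw [Finset.sum_range_succ, Nat.choose_self]; norm_num
      have hsplit2 : (∑ i ∈ range (m+1),
            ((m.choose i : ℕ) : LaurentSeries ℚ) * yy^i * (1-yy)^(m-i) * sK i)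
          = (∑ i ∈ range m,
              ((m.choose i : ℕ) : LaurentSeries ℚ) * yy^i * (1-yy)^(m-i) * sK i)
            + yy^m * sK m := by
        rw [Finset.sum_range_succ, Nat.choose_self, Nat.sub_self]; norm_num
      have hAB : (1-yy)^m * (∑ i ∈ range m, ((m.choose i : ℕ) : LaurentSeries ℚ) * yy^i * b i)
          = (1-yy) * (∑ i ∈ range m,
              ((m.choose i : ℕ) : LaurentSeries ℚ) * yy^i * (1-yy)^(m-i) * sK i) := by
        rw [Finset.mul_sum, Finset.mul_sum]
        apply Finset.sum_congr rfl
        intro i hi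
        have hilt : i < m := Finset.mem_range.mp hi
        have hIH := IH i hilt
        have hpow : (1-yy)^m = (1-yy)^(m-i) * (1-yy)^i := by
          rw [← pow_add]; congr 1; omega
        rw [hpow]
        linear_combination (((m.choose i : ℕ) : LaurentSeries ℚ) * yy^i * (1-yy)^(m-i)) * hIH
      rw [hsplit1] at hr
      rw [hsplit2] at hR
      have hE : ((1-yy) * sK m - (1-yy)^m * b m) * (1 - yy^(m+1)) = 0 := by
        linear_combination ((1-yy)^m) * hr - hR - yy * hAB
      rcases mul_eq_zero.mp hE with h | h
      · linear_combination -h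
      · exact absurd h (one_sub_yy_pow_ne (m+1) (by omega))

lemma chooseId (d j : ℕ) (h : j ≤ d) :
    d.choose (j+1) + (d+2) * d.choose j = (j+2) * (d+1).choose (j+1) := by
  obtain ⟨e, rfl⟩ : ∃ e, d = j + e := ⟨d - j, by omega⟩
  have h1 := Nat.choose_succ_right_eq (j+e) j
  rw [Nat.add_sub_cancel_left] at h1
  have h2 : (j+e+1).choose (j+1) = (j+e).choose j + (j+e).choose (j+1) :=
    Nat.choose_succ_succ _ _
  zify at h1 h2 ⊢
  linear_combination (-(j:ℤ)-2) * h2 - h1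

set_option maxHeartbeats 1000000 in
lemma bridgeFI (d : ℕ) (hd : 1 ≤ d) :
    ∑ j ∈ range (d+1), ((-1:LaurentSeries ℚ)^j * ((d.choose j : ℕ) : LaurentSeries ℚ))
        * ((DD (j+1) - 1) - ((d:LaurentSeries ℚ)+2) * (DD (j+2) - 1))
      = sK (d+1) := by
  have expand : ∀ j ∈ range (d+1),
      ((-1:LaurentSeries ℚ)^j * ((d.choose j : ℕ) : LaurentSeries ℚ))
          * ((DD (j+1) - 1) - ((d:LaurentSeries ℚ)+2) * (DD (j+2) - 1))
        = (-1:LaurentSeries ℚ)^j * ((d.choose j : ℕ) : LaurentSeries ℚ) * DD (j+1)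
          + (-(((d:LaurentSeries ℚ)+2)) * ((-1:LaurentSeries ℚ)^j
              * ((d.choose j : ℕ) : LaurentSeries ℚ) * DD (j+2)))
          + ((d:LaurentSeries ℚ)+1) * ((-1:LaurentSeries ℚ)^j
              * ((d.choose j : ℕ) : LaurentSeries ℚ)) := by
    intro j _; ring
  rw [Finset.sum_congr rfl expand, Finset.sum_add_distrib, Finset.sum_add_distrib,
    ← Finset.mul_sum, ← Finset.mul_sum, alt1 d hd, mul_zero, add_zero]
  -- extend T1 to range (d+2)
  have hT1 : (∑ j ∈ range (d+1), (-1:LaurentSeries ℚ)^j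
        * ((d.choose j : ℕ) : LaurentSeries ℚ) * DD (j+1))
      = ∑ j ∈ range (d+2), (-1:LaurentSeries ℚ)^j
        * ((d.choose j : ℕ) : LaurentSeries ℚ) * DD (j+1) := by
    rw [Finset.sum_range_succ (n := d+1), Nat.choose_succ_self]
    norm_num
  rw [hT1, Finset.sum_range_succ' (fun j => (-1:LaurentSeries ℚ)^j
    * ((d.choose j : ℕ) : LaurentSeries ℚ) * DD (j+1)) (d+1)]
  rw [sK, Finset.sum_range_succ' (fun k => (-1:LaurentSeries ℚ)^k * ((k:LaurentSeries ℚ)+1)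
    * (((d+1).choose k : ℕ) : LaurentSeries ℚ) * DD (k+1)) (d+1)]
  norm_num
  rw [Finset.mul_sum]
  have hBC : (∑ k ∈ range (d+1), (-1:LaurentSeries ℚ)^(k+1)
        * ((d.choose (k+1) : ℕ) : LaurentSeries ℚ) * DD (k+1+1))
      + (∑ i ∈ range (d+1), (-2 + -(d:LaurentSeries ℚ))
        * ((-1:LaurentSeries ℚ)^i * ((d.choose i : ℕ) : LaurentSeries ℚ) * DD (i+2)))
      = ∑ x ∈ range (d+1), (-1:LaurentSeries ℚ)^(x+1) * ((x:LaurentSeries ℚ)+1+1)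
        * (((d+1).choose (x+1) : ℕ) : LaurentSeries ℚ) * DD (x+1+1) := by
    rw [← Finset.sum_add_distrib]
    apply Finset.sum_congr rfl
    intro j hj
    have hjd : j ≤ d := by have := Finset.mem_range.mp hj; omega
    have hch := chooseId d j hjd
    have hcast : ((d.choose (j+1) : ℕ) : LaurentSeries ℚ)
          + ((d:LaurentSeries ℚ)+2) * ((d.choose j : ℕ) : LaurentSeries ℚ)
        = ((j:LaurentSeries ℚ)+2) * (((d+1).choose (j+1) : ℕ) : LaurentSeries ℚ) := by
      exact_mod_cast congrArg (fun t : ℕ => (t : LaurentSeries ℚ)) hch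
    linear_combination ((-1:LaurentSeries ℚ)^(j+1) * DD (j+2)) * hcast
  linear_combination hBC


lemma geomDiv_coe (a : ℕ) (ha : 1 ≤ a) :
    ((geomDiv a : PowerSeries ℚ) : LaurentSeries ℚ) = DD a - 1 := by
  have h1 : (1 - yy^a) * ((geomDiv a : PowerSeries ℚ) : LaurentSeries ℚ) = yy^a := by
    have := congrArg (fun f : PowerSeries ℚ => (f : LaurentSeries ℚ)) (geomDiv_mul a ha)
    simpa only [PowerSeries.coe_mul, PowerSeries.coe_sub, PowerSeries.coe_one,
      PowerSeries.coe_pow, PowerSeries.coe_X, yy] using this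
  have h2 : (1 - yy^a) * (DD a - 1) = yy^a := by
    have := DD_mul a ha
    linear_combination this
  exact mul_left_cancel₀ (one_sub_yy_pow_ne a ha) (h1.trans h2.symm)


/-- for `n ≥ 2`, `β_n = ζ_q(1−n)(q − (n+1)q²)`, i.e. explicitly
`β_n = Σ_{m≥1} [m]^{n-1}(q^m − (n+1)q^{2m})`, as an identity between the expansion of the
rational function `β_n` at `q = 0` and the displayed formal power series. -/
theorem bernoulliCarlitz_eq_zetaQ (β : ℕ → RatFunc ℚ) (h0 : β 0 = 1)
    (hrec : ∀ m : ℕ, 1 ≤ m →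
      RatFunc.X * (∑ i ∈ Finset.range (m + 1), (m.choose i : RatFunc ℚ) * RatFunc.X ^ i * β i)
        - β m = if m = 1 then 1 else 0)
    (n : ℕ) (hn : 2 ≤ n) :
    (β n : LaurentSeries ℚ) =
      ((zetaQNeg n (X - ((n : PowerSeries ℚ) + 1) * X ^ 2) : PowerSeries ℚ) :
        LaurentSeries ℚ) := by
  -- set up b
  set b : ℕ → LaurentSeries ℚ := fun i => (β i : LaurentSeries ℚ) with hb
  have hb0 : b 0 = 1 := by rw [hb]; simp only [h0, map_one]
  have hXcoe : ((RatFunc.X : RatFunc ℚ) : LaurentSeries ℚ) = yy := by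
    rw [RatFunc.coe_X, yy, PowerSeries.coe_X]
  have hbrec : ∀ m : ℕ, 1 ≤ m →
      yy * (∑ i ∈ range (m+1), ((m.choose i : ℕ) : LaurentSeries ℚ) * yy^i * b i) - b m
        = if m = 1 then 1 else 0 := by
    intro m hm
    have h := congrArg (fun f : RatFunc ℚ => (f : LaurentSeries ℚ)) (hrec m hm)
    simp only [map_sub, map_mul, map_sum, map_pow, map_natCast] at h
    rw [hXcoe] at h
    split_ifs at h ⊢ with hif
    · simpa only [map_one] using h
    · simpa only [map_zero] using h
  obtain ⟨d, rfl⟩ : ∃ d, n = d + 1 := ⟨n - 1, by omega⟩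
  have hd : 1 ≤ d := by omega
  -- closed formula for b
  have hclosed := beta_closed b hb0 hbrec (d+1)
  -- main1 with the right constant
  have hC : C ((d:ℚ)+2) = ((d+1 : ℕ) : PowerSeries ℚ) + 1 := by
    rw [map_add, map_natCast, map_ofNat]
    push_cast
    ring
  have hm1 := main1 d ((d:ℚ)+2)
  rw [hC] at hm1
  have hm1K := congrArg (fun f : PowerSeries ℚ => (f : LaurentSeries ℚ)) hm1
  simp only [PowerSeries.coe_mul, PowerSeries.coe_sub, PowerSeries.coe_one,
    PowerSeries.coe_pow, PowerSeries.coe_X, map_sum, PowerSeries.coe_smul,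
    map_natCast, map_add, map_one] at hm1K
  rw [show (HahnSeries.single (1:ℤ) (1:ℚ)) = yy from PowerSeries.coe_X.symm] at hm1K
  have hsmul : ∀ q : ℚ, ∀ v : LaurentSeries ℚ,
      q • v = (HahnSeries.C : ℚ →+* LaurentSeries ℚ) q * v := fun q v =>
    HahnSeries.C_mul_eq_smul.symm
  have hterm : ∀ x ∈ Finset.range (d+1),
      ((-1:ℚ)^x * (d.choose x : ℚ)) • ((HahnSeries.ofPowerSeries ℤ ℚ) (geomDiv (x + 1)) -
          (((d+1:ℕ) : LaurentSeries ℚ) + 1) * (HahnSeries.ofPowerSeries ℤ ℚ) (geomDiv (x + 2)))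
        = ((-1:LaurentSeries ℚ)^x * ((d.choose x : ℕ) : LaurentSeries ℚ))
            * ((DD (x+1) - 1) - ((d:LaurentSeries ℚ)+2) * (DD (x+2) - 1)) := by
    intro x hx
    have g1 : (HahnSeries.ofPowerSeries ℤ ℚ) (geomDiv (x + 1)) = DD (x+1) - 1 :=
      geomDiv_coe (x+1) (by omega)
    have g2 : (HahnSeries.ofPowerSeries ℤ ℚ) (geomDiv (x + 2)) = DD (x+2) - 1 :=
      geomDiv_coe (x+2) (by omega)
    have hq : (HahnSeries.C : ℚ →+* LaurentSeries ℚ) ((-1:ℚ)^x * (d.choose x : ℚ))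
        = (-1:LaurentSeries ℚ)^x * ((d.choose x : ℕ) : LaurentSeries ℚ) := by
      rw [map_mul, map_pow, map_neg, map_one, map_natCast]
    rw [g1, g2, hsmul, hq]
    push_cast
    ring
  rw [Finset.sum_congr rfl hterm, bridgeFI d hd] at hm1K
  have hne1 : (1:LaurentSeries ℚ) - yy ≠ 0 := by
    have := one_sub_yy_pow_ne 1 le_rfl
    rwa [pow_one] at this
  have hcl2 : (1-yy)^d * b (d+1) = sK (d+1) := by
    apply mul_left_cancel₀ hne1
    rw [pow_succ] at hclosed
    linear_combination hclosed
  have hbeta : b (d+1) = ((β (d+1) : RatFunc ℚ) : LaurentSeries ℚ) := rfl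
  rw [hbeta] at hcl2
  have hfin := hm1K.trans hcl2.symm
  exact (mul_left_cancel₀ (pow_ne_zero d hne1) (by linear_combination hfin)).symm
end

section
/- For all n ≥ 0 and positive rational x, q^x β_n(x) = Σ_{k≥0} q^{k+x} [k+x]^{n−1} − (n+1) Σ_{k≥0} q^{2k+2x} [k+x]^{n−1}, as convergent (Puiseux) series in q. -/
open Finset Filter


/-- The quantum number `[y] = (q^y − 1)/(q − 1)` for a real exponent `y` (via `rpow`). -/
noncomputable def qNumR (q y : ℝ) : ℝ := (q ^ y - 1) / (q - 1)

noncomputable def qPhi (q : ℝ) (β : ℕ → ℝ) (n : ℕ) (u : ℝ) : ℝ :=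
  ∑ i ∈ Finset.range (n + 1),
    (n.choose i : ℝ) * u ^ i * β i * ((u - 1) / (q - 1)) ^ (n - i)

lemma qPhi_step (q : ℝ) (hq : q ∈ Set.Ioo (0 : ℝ) 1) (β : ℕ → ℝ) (h0 : β 0 = 1)
    (hrec : ∀ m : ℕ, 1 ≤ m →
      q * (∑ i ∈ Finset.range (m + 1), (m.choose i : ℝ) * q ^ i * β i) - β m
        = if m = 1 then 1 else 0)
    (n : ℕ) (u : ℝ) :
    qPhi q β n u - q * qPhi q β n (q * u)
      = (1 - q) * ((u - 1) / (q - 1)) ^ n - n * u * ((u - 1) / (q - 1)) ^ (n - 1) := by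
  have hq1 : q - 1 ≠ 0 := by have := hq.2; intro h; nlinarith
  set c : ℝ := (u - 1) / (q - 1) with hc
  have hcu : (q * u - 1) / (q - 1) = c + u := by
    rw [hc]; field_simp; ring
  -- expand q * qPhi q β n (q*u)
  have key : q * qPhi q β n (q * u)
      = ∑ m ∈ range (n + 1), (n.choose m : ℝ) * u ^ m * c ^ (n - m)
          * (q * ∑ i ∈ range (m + 1), (m.choose i : ℝ) * q ^ i * β i) := by
    have step1 : q * qPhi q β n (q * u)
        = ∑ i ∈ range (n + 1), ∑ j ∈ range (n + 1),
            (n.choose i : ℝ) * ((n - i).choose j : ℝ) * q ^ (i + 1) * β i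
              * c ^ j * (u ^ i * u ^ (n - i - j)) := by
      unfold qPhi
      rw [Finset.mul_sum]
      refine Finset.sum_congr rfl fun i hi => ?_
      rw [hcu, add_pow]
      rw [Finset.mul_sum, Finset.mul_sum]
      rw [← Finset.sum_subset (Finset.range_subset_range.2
          (Nat.add_le_add_right (Nat.sub_le n i) 1))]
      · refine Finset.sum_congr rfl fun j hj => ?_
        rw [mul_pow]
        ring
      · intro j hj hj'
        have : n - i < j := by
          simp only [Finset.mem_range] at hj hj'; omega
        rw [Nat.choose_eq_zero_of_lt this]
        push_cast
        ring
    rw [step1]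
    have step2 : ∀ i, ∑ j ∈ range (n + 1),
            (n.choose i : ℝ) * ((n - i).choose j : ℝ) * q ^ (i + 1) * β i
              * c ^ j * (u ^ i * u ^ (n - i - j))
        = ∑ m ∈ range (n + 1),
            (n.choose i : ℝ) * ((n - i).choose (n - m) : ℝ) * q ^ (i + 1) * β i
              * c ^ (n - m) * (u ^ i * u ^ (n - i - (n - m))) := by
      intro i
      rw [← Finset.sum_range_reflect]
      refine Finset.sum_congr rfl fun m hm => ?_
      simp only [Nat.add_sub_cancel]
    simp only [step2]
    rw [Finset.sum_comm]
    refine Finset.sum_congr rfl fun m hm => ?_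
    have hmn : m ≤ n := by simpa [Nat.lt_succ_iff] using hm
    rw [← Finset.sum_subset (Finset.range_subset_range.2 (Nat.add_le_add_right hmn 1))]
    · conv_rhs => rw [Finset.mul_sum, Finset.mul_sum]
      refine Finset.sum_congr rfl fun i hi => ?_
      have him : i ≤ m := by simpa [Nat.lt_succ_iff] using hi
      have h1 : (n - i).choose (n - m) = (n - i).choose (m - i) := by
        rw [show n - m = (n - i) - (m - i) by omega]
        exact Nat.choose_symm (by omega)
      have h2 : (n.choose m : ℝ) * (m.choose i : ℝ) = (n.choose i : ℝ) * ((n - i).choose (m - i) : ℝ) := by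
        exact_mod_cast congrArg Nat.cast (Nat.choose_mul him : n.choose m * m.choose i = _)
      have h3 : n - i - (n - m) = m - i := by omega
      have h4 : u ^ i * u ^ (m - i) = u ^ m := by
        rw [← pow_add]; congr 1; omega
      rw [h1, h3]
      calc (n.choose i : ℝ) * ((n - i).choose (m - i) : ℝ) * q ^ (i + 1) * β i
              * c ^ (n - m) * (u ^ i * u ^ (m - i))
          = ((n.choose i : ℝ) * ((n - i).choose (m - i) : ℝ)) * (q ^ (i + 1) * β i
              * c ^ (n - m) * u ^ m) := by rw [h4]; ring
        _ = ((n.choose m : ℝ) * (m.choose i : ℝ)) * (q ^ (i + 1) * β i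
              * c ^ (n - m) * u ^ m) := by rw [h2]
        _ = (n.choose m : ℝ) * u ^ m * c ^ (n - m) * (q * ((m.choose i : ℝ) * q ^ i * β i)) := by
              rw [pow_succ]; ring
    · intro i hi hi'
      have h5 : n - i < n - m := by
        simp only [Finset.mem_range] at hi hi'; omega
      rw [Nat.choose_eq_zero_of_lt h5]
      push_cast; ring
  rw [key]
  unfold qPhi
  rw [← hc, ← Finset.sum_sub_distrib]
  have hδ : ∀ m ∈ range (n + 1),
      (n.choose m : ℝ) * u ^ m * β m * c ^ (n - m)
        - (n.choose m : ℝ) * u ^ m * c ^ (n - m)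
            * (q * ∑ i ∈ range (m + 1), (m.choose i : ℝ) * q ^ i * β i)
      = (1 - q) * (if m = 0 then (n.choose m : ℝ) * u ^ m * c ^ (n - m) else 0)
        - (if m = 1 then (n.choose m : ℝ) * u ^ m * c ^ (n - m) else 0) := by
    intro m hm
    rcases Nat.eq_zero_or_pos m with h | h
    · subst h; simp [h0]; ring
    · have hr := hrec m h
      have hm0 : m ≠ 0 := by omega
      have hS : q * ∑ i ∈ range (m + 1), (m.choose i : ℝ) * q ^ i * β i
          = β m + (if m = 1 then 1 else 0) := by linarith
      rw [hS]
      by_cases h1 : m = 1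
      · subst h1; simp; ring
      · simp [hm0, h1]; ring
  rw [Finset.sum_congr rfl hδ, Finset.sum_sub_distrib, ← Finset.mul_sum,
    Finset.sum_ite_eq', Finset.sum_ite_eq']
  rcases n with _ | s
  · simp
  · simp [Nat.choose_one_right, Finset.mem_range]

/-- for all `n ≥ 0` and positive rational `x`, the `q`-Bernoulli polynomial
`β_n(x) = Σ_{i=0}^n C(n,i) q^{ix} β_i [x]^{n−i}` (built from the Bernoulli–Carlitz
fractions `β_i`) satisfies
`q^x β_n(x) = Σ_{k≥0} q^{k+x} [k+x]^{n−1} − (n+1) Σ_{k≥0} q^{2k+2x} [k+x]^{n−1}`,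
the series converging for `0 < q < 1`. -/
theorem qBernoullipoly_series (q : ℝ) (hq : q ∈ Set.Ioo (0 : ℝ) 1)
    (β : ℕ → ℝ) (h0 : β 0 = 1)
    (hrec : ∀ m : ℕ, 1 ≤ m →
      q * (∑ i ∈ Finset.range (m + 1), (m.choose i : ℝ) * q ^ i * β i) - β m
        = if m = 1 then 1 else 0)
    (n : ℕ) (x : ℚ) (hx : 0 < x) :
    q ^ (x : ℝ) * (∑ i ∈ Finset.range (n + 1),
        (n.choose i : ℝ) * q ^ ((i : ℝ) * x) * β i * qNumR q x ^ (n - i)) =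
      (∑' k : ℕ, q ^ ((k : ℝ) + x) * qNumR q ((k : ℝ) + x) ^ ((n : ℤ) - 1))
        - ((n : ℝ) + 1) *
          ∑' k : ℕ, q ^ (2 * (k : ℝ) + 2 * x) * qNumR q ((k : ℝ) + x) ^ ((n : ℤ) - 1) := by
  obtain ⟨hq0, hq1⟩ := hq
  have h1q : (0:ℝ) < 1 - q := by linarith
  have h1q' : (1:ℝ) - q ≠ 0 := ne_of_gt h1q
  have hq1' : q - 1 ≠ 0 := by intro h; nlinarith
  set X : ℝ := (x : ℝ) with hX
  have hXpos : 0 < X := by rw [hX]; exact_mod_cast hx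
  set v : ℕ → ℝ := fun k => q ^ ((k : ℝ) + X) with hv
  set c : ℕ → ℝ := fun k => qNumR q ((k : ℝ) + X) with hcdef
  have hvpos : ∀ k, 0 < v k := fun k => Real.rpow_pos_of_pos hq0 _
  have hvlt1 : ∀ k, v k < 1 := fun k =>
    Real.rpow_lt_one hq0.le hq1 (by positivity)
  have hvgeom : ∀ k, v k = q ^ X * q ^ k := by
    intro k
    show q ^ ((k : ℝ) + X) = _
    rw [add_comm, Real.rpow_add hq0, Real.rpow_natCast]
  have hvsucc : ∀ k, v (k + 1) = q * v k := by
    intro k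
    show q ^ (((k:ℕ) + 1 : ℕ) + X : ℝ) = q * q ^ ((k : ℝ) + X)
    push_cast
    rw [show (k:ℝ) + 1 + X = ((k:ℝ) + X) + 1 by ring, Real.rpow_add hq0, Real.rpow_one]
    ring
  have hcv : ∀ k, c k = (v k - 1) / (q - 1) := fun k => rfl
  have hc' : ∀ k, c k = (1 - v k) / (1 - q) := by
    intro k
    rw [hcv k, div_eq_div_iff hq1' h1q']
    ring
  have hcpos : ∀ k, 0 < c k := fun k => by
    rw [hc']; exact div_pos (by linarith [hvlt1 k]) h1q
  have hcle : ∀ k, c k ≤ (1 - q)⁻¹ := by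
    intro k
    rw [hc' k, div_le_iff₀ h1q, inv_mul_cancel₀ h1q']
    linarith [hvpos k]
  have hvle0 : ∀ k, v k ≤ v 0 := by
    intro k
    rw [hvgeom k, hvgeom 0, pow_zero, mul_one]
    have h1 : q ^ k ≤ 1 := pow_le_one₀ hq0.le hq1.le
    have h2 : 0 < q ^ X := Real.rpow_pos_of_pos hq0 X
    nlinarith
  have hcge : ∀ k, c 0 ≤ c k := by
    intro k
    rw [hc' 0, hc' k]
    gcongr
    linarith [hvle0 k]
  have hczpos : ∀ k, 0 < c k ^ ((n:ℤ) - 1) := fun k => zpow_pos (hcpos k) _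
  have hinvge1 : (1:ℝ) ≤ (1 - q)⁻¹ := (one_le_inv₀ h1q).2 (by linarith)
  set K : ℝ := (1 - q)⁻¹ ^ n + (1 - q)⁻¹ ^ (n - 1) + (c 0)⁻¹ with hKdef
  have hKsub1 : ∀ k, c k ^ n ≤ K := by
    intro k
    have h1 : c k ^ n ≤ (1 - q)⁻¹ ^ n := pow_le_pow_left₀ (hcpos k).le (hcle k) n
    have h2 : (0:ℝ) ≤ (1 - q)⁻¹ ^ (n - 1) := by positivity
    have h3 : (0:ℝ) ≤ (c 0)⁻¹ := inv_nonneg.2 (hcpos 0).le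
    rw [hKdef]; linarith
  have hKsub2 : ∀ k, c k ^ (n - 1) ≤ K := by
    intro k
    have h1 : c k ^ (n - 1) ≤ (1 - q)⁻¹ ^ (n - 1) := pow_le_pow_left₀ (hcpos k).le (hcle k) _
    have h2 : (0:ℝ) ≤ (1 - q)⁻¹ ^ n := by positivity
    have h3 : (0:ℝ) ≤ (c 0)⁻¹ := inv_nonneg.2 (hcpos 0).le
    rw [hKdef]; linarith
  have hKsub3 : ∀ k, c k ^ ((n:ℤ) - 1) ≤ K := by
    intro k
    rcases n with _ | s
    · simp only [Nat.cast_zero, zero_sub, zpow_neg, zpow_one]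
      have h2 : (c k)⁻¹ ≤ (c 0)⁻¹ := inv_anti₀ (hcpos 0) (hcge k)
      have h3 : (0:ℝ) ≤ (1 - q)⁻¹ ^ 0 := by positivity
      have h4 : (0:ℝ) ≤ (1 - q)⁻¹ ^ (0 - 1) := by positivity
      rw [hKdef]; linarith
    · calc c k ^ (((s+1:ℕ):ℤ) - 1) = c k ^ ((s+1) - 1 : ℕ) := by
            rw [show ((s+1:ℕ):ℤ) - 1 = (((s+1) - 1 : ℕ):ℤ) by omega, zpow_natCast]
        _ ≤ K := hKsub2 k
  have hgeo : Summable (fun k : ℕ => q ^ k) := summable_geometric_of_lt_one hq0.le hq1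
  have hsum_of : ∀ (g : ℕ → ℝ) (C : ℝ), (∀ k, 0 ≤ g k) → (∀ k, g k ≤ C * q ^ k) →
      Summable g := by
    intro g C h1 h2
    exact Summable.of_nonneg_of_le h1 h2 (hgeo.mul_left C)
  have hsumv : ∀ (w : ℕ → ℝ), (∀ k, 0 ≤ w k) → (∀ k, w k ≤ K) →
      Summable (fun k => v k * w k) := by
    intro w hw1 hw2
    refine hsum_of _ (q ^ X * K) (fun k => mul_nonneg (hvpos k).le (hw1 k)) fun k => ?_
    calc v k * w k ≤ v k * K := mul_le_mul_of_nonneg_left (hw2 k) (hvpos k).le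
      _ = q ^ X * K * q ^ k := by rw [hvgeom k]; ring
  have hv2le : ∀ k, v k ^ 2 ≤ v k := by
    intro k
    nlinarith [hvpos k, hvlt1 k]
  have hsumv2 : ∀ (w : ℕ → ℝ), (∀ k, 0 ≤ w k) → (∀ k, w k ≤ K) →
      Summable (fun k => v k ^ 2 * w k) := by
    intro w hw1 hw2
    have hK0 : 0 ≤ K := le_trans (hw1 0) (hw2 0)
    refine hsum_of _ (q ^ X * K) (fun k => mul_nonneg (by positivity) (hw1 k)) fun k => ?_
    calc v k ^ 2 * w k ≤ v k * K :=
          mul_le_mul (hv2le k) (hw2 k) (hw1 k) (hvpos k).le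
      _ = q ^ X * K * q ^ k := by rw [hvgeom k]; ring
  have hsum3 : Summable (fun k => v k * c k ^ n) :=
    hsumv _ (fun k => pow_nonneg (hcpos k).le _) hKsub1
  have hsum4 : Summable (fun k => v k ^ 2 * c k ^ (n - 1)) :=
    hsumv2 _ (fun k => pow_nonneg (hcpos k).le _) hKsub2
  have hsa : Summable (fun k => v k * c k ^ ((n:ℤ) - 1)) :=
    hsumv _ (fun k => (hczpos k).le) hKsub3
  have hsb : Summable (fun k => v k ^ 2 * c k ^ ((n:ℤ) - 1)) :=
    hsumv2 _ (fun k => (hczpos k).le) hKsub3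
  -- the telescoping sequence
  set f : ℕ → ℝ := fun k => v k * qPhi q β n (v k) with hf
  have hstep : ∀ k, f k - f (k + 1)
      = (1 - q) * (v k * c k ^ n) - n * (v k ^ 2 * c k ^ (n - 1)) := by
    intro k
    have h := qPhi_step q ⟨hq0, hq1⟩ β h0 hrec n (v k)
    rw [← hcv k] at h
    show v k * qPhi q β n (v k) - v (k + 1) * qPhi q β n (v (k + 1)) = _
    rw [hvsucc k]
    calc v k * qPhi q β n (v k) - q * v k * qPhi q β n (q * v k)
        = v k * (qPhi q β n (v k) - q * qPhi q β n (q * v k)) := by ring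
      _ = v k * ((1 - q) * c k ^ n - n * v k * c k ^ (n - 1)) := by rw [h]
      _ = _ := by ring
  set B : ℝ := ∑ i ∈ Finset.range (n + 1),
      (n.choose i : ℝ) * |β i| * (1 - q)⁻¹ ^ (n - i) with hBdef
  have hPhiB : ∀ k, |qPhi q β n (v k)| ≤ B := by
    intro k
    refine (Finset.abs_sum_le_sum_abs _ _).trans ?_
    rw [hBdef]
    refine Finset.sum_le_sum fun i hi => ?_
    have habs : |(n.choose i : ℝ) * v k ^ i * β i * ((v k - 1) / (q - 1)) ^ (n - i)|
        = (n.choose i : ℝ) * v k ^ i * |β i| * c k ^ (n - i) := by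
      rw [abs_mul, abs_mul, abs_mul,
        abs_of_nonneg (by positivity : (0:ℝ) ≤ (n.choose i : ℝ)),
        abs_of_nonneg (pow_nonneg (hvpos k).le i), ← hcv k,
        abs_of_nonneg (pow_nonneg (hcpos k).le _)]
    rw [habs]
    calc (n.choose i : ℝ) * v k ^ i * |β i| * c k ^ (n - i)
        ≤ (n.choose i : ℝ) * 1 * |β i| * (1 - q)⁻¹ ^ (n - i) := by
          gcongr <;> first
            | exact pow_nonneg (hcpos k).le _
            | exact pow_le_one₀ (hvpos k).le (hvlt1 k).le
            | exact (hcpos k).le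
            | exact hcle k
      _ = (n.choose i : ℝ) * |β i| * (1 - q)⁻¹ ^ (n - i) := by ring
  have htend : Filter.Tendsto f Filter.atTop (nhds 0) := by
    have hbound : ∀ k, ‖f k‖ ≤ q ^ X * B * q ^ k := by
      intro k
      have : ‖f k‖ = v k * |qPhi q β n (v k)| := by
        rw [Real.norm_eq_abs, abs_mul, abs_of_nonneg (hvpos k).le]
      rw [this]
      calc v k * |qPhi q β n (v k)| ≤ v k * B :=
            mul_le_mul_of_nonneg_left (hPhiB k) (hvpos k).le
        _ = q ^ X * B * q ^ k := by rw [hvgeom k]; ring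
    have hg : Filter.Tendsto (fun k : ℕ => q ^ X * B * q ^ k) Filter.atTop (nhds 0) := by
      have := (tendsto_pow_atTop_nhds_zero_of_lt_one hq0.le hq1).const_mul (q ^ X * B)
      simpa using this
    exact squeeze_zero_norm hbound hg
  have hsumtel : Summable (fun k => f k - f (k + 1)) := by
    have : (fun k => f k - f (k + 1))
        = fun k => (1 - q) * (v k * c k ^ n) - n * (v k ^ 2 * c k ^ (n - 1)) :=
      funext hstep
    rw [this]
    exact (hsum3.mul_left _).sub (hsum4.mul_left _)
  have htsum_tel : ∑' k, (f k - f (k + 1)) = f 0 := by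
    have h1 := hsumtel.hasSum.tendsto_sum_nat
    have h2 : Filter.Tendsto (fun N => ∑ k ∈ Finset.range N, (f k - f (k + 1)))
        Filter.atTop (nhds (f 0)) := by
      have he : ∀ N, ∑ k ∈ Finset.range N, (f k - f (k + 1)) = f 0 - f N := fun N =>
        Finset.sum_range_sub' f N
      simp only [he]
      simpa using tendsto_const_nhds.sub htend
    exact tendsto_nhds_unique h1 h2
  have htel_val : ∑' k, (f k - f (k + 1))
      = (1 - q) * ∑' k, (v k * c k ^ n) - n * ∑' k, (v k ^ 2 * c k ^ (n - 1)) := by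
    calc ∑' k, (f k - f (k + 1))
        = ∑' k, ((1 - q) * (v k * c k ^ n) - n * (v k ^ 2 * c k ^ (n - 1))) :=
          tsum_congr hstep
      _ = _ := by
          rw [Summable.tsum_sub (hsum3.mul_left _) (hsum4.mul_left _), tsum_mul_left, tsum_mul_left]
  -- identify LHS with f 0
  have hv0 : v 0 = q ^ X := by
    rw [hvgeom 0, pow_zero, mul_one]
  have hLHS : q ^ X * (∑ i ∈ Finset.range (n + 1),
      (n.choose i : ℝ) * q ^ ((i : ℝ) * X) * β i * qNumR q X ^ (n - i)) = f 0 := by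
    show _ = v 0 * qPhi q β n (v 0)
    rw [hv0]
    unfold qPhi
    congr 1
    refine Finset.sum_congr rfl fun i hi => ?_
    have h1 : q ^ ((i : ℝ) * X) = (q ^ X) ^ i := by
      rw [show (i : ℝ) * X = X * (i : ℝ) by ring, Real.rpow_mul hq0.le, Real.rpow_natCast]
    rw [h1]
    rfl
  -- identify RHS series
  have hA : ∀ k : ℕ, q ^ ((k : ℝ) + X) * qNumR q ((k : ℝ) + X) ^ ((n:ℤ) - 1)
      = v k * c k ^ ((n:ℤ) - 1) := fun k => rfl
  have hB2 : ∀ k : ℕ, q ^ (2 * (k : ℝ) + 2 * X) * qNumR q ((k : ℝ) + X) ^ ((n:ℤ) - 1)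
      = v k ^ 2 * c k ^ ((n:ℤ) - 1) := by
    intro k
    congr 1
    rw [show 2 * (k : ℝ) + 2 * X = ((k : ℝ) + X) * ((2:ℕ):ℝ) by push_cast; ring,
      Real.rpow_mul hq0.le, Real.rpow_natCast]
  have hab : ∀ k, v k * c k ^ ((n:ℤ) - 1) - v k ^ 2 * c k ^ ((n:ℤ) - 1)
      = (1 - q) * (v k * c k ^ n) := by
    intro k
    have h1 : 1 - v k = (1 - q) * c k := by
      rw [hc' k]
      field_simp
    have h2 : c k ^ ((n:ℤ) - 1) * c k = c k ^ n := by
      have h := zpow_add_one₀ (ne_of_gt (hcpos k)) ((n:ℤ) - 1)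
      rw [sub_add_cancel] at h
      rw [← h, zpow_natCast]
    calc v k * c k ^ ((n:ℤ) - 1) - v k ^ 2 * c k ^ ((n:ℤ) - 1)
        = (1 - v k) * v k * c k ^ ((n:ℤ) - 1) := by ring
      _ = (1 - q) * (v k * (c k ^ ((n:ℤ) - 1) * c k)) := by rw [h1]; ring
      _ = (1 - q) * (v k * c k ^ n) := by rw [h2]
  have e1 : (∑' k, v k * c k ^ ((n:ℤ) - 1)) - (∑' k, v k ^ 2 * c k ^ ((n:ℤ) - 1))
      = (1 - q) * ∑' k, (v k * c k ^ n) := by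
    rw [← Summable.tsum_sub hsa hsb, tsum_congr hab, tsum_mul_left]
  have e2 : (n : ℝ) * (∑' k, v k ^ 2 * c k ^ ((n:ℤ) - 1))
      = (n : ℝ) * ∑' k, (v k ^ 2 * c k ^ (n - 1)) := by
    rcases Nat.eq_zero_or_pos n with h | h
    · simp [h]
    · congr 1
      refine tsum_congr fun k => ?_
      congr 1
      rw [show (n:ℤ) - 1 = ((n - 1 : ℕ) : ℤ) by omega, zpow_natCast]
  rw [tsum_congr hA, tsum_congr hB2, hLHS, ← htsum_tel, htel_val]
  linarith [e1, e2]
end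

section
/- For n ≥ 0 and positive rational x, q^x β_n(x) = ζ_q(1−n, x)(q − (n+1)q²); explicitly, q^x β_n(x) = Σ_{k≥0} [k+x]^{n−1}(q^{k+x} − (n+1) q^{2(k+x)}). -/
open Finset

section QAux
lemma qaux_sign {j k : ℕ} (h : j ≤ k) : ((-1:ℝ))^(k-j) = (-1)^k * (-1)^j := by
  obtain ⟨d, rfl⟩ := Nat.exists_eq_add_of_le h
  rw [Nat.add_sub_cancel_left, pow_add, mul_comm ((-1:ℝ)^j), mul_assoc, ← pow_add, ← two_mul,
    pow_mul]
  norm_num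

lemma qaux_expand (N : ℕ) (Y : ℝ) :
    (Y - 1)^N = ∑ j ∈ range (N+1), (N.choose j : ℝ) * ((-1)^N * (-1)^j) * Y^j := by
  have h := add_pow Y (-1 : ℝ) N
  rw [show Y - 1 = Y + (-1) from by ring, h]
  refine Finset.sum_congr rfl fun j hj => ?_
  have hjN : j ≤ N := Nat.lt_succ_iff.mp (mem_range.mp hj)
  rw [qaux_sign hjN]
  ring

lemma qaux_alt (M : ℕ) :
    ∑ j ∈ range (M+1), (M.choose j : ℝ) * (-1)^j = if M = 0 then 1 else 0 := by
  have h := Int.alternating_sum_range_choose (n := M)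
  have h2 : ((∑ m ∈ range (M + 1), ((-1) ^ m * M.choose m : ℤ) : ℤ) : ℝ)
      = ∑ j ∈ range (M+1), (M.choose j : ℝ) * (-1)^j := by
    push_cast
    exact Finset.sum_congr rfl fun j _ => by ring
  rw [← h2, h]
  split <;> norm_num

lemma qaux_alt' (M : ℕ) (hM : 1 ≤ M) :
    ∑ j ∈ range (M+1), (M.choose j : ℝ) * (-1)^(j+1) * ((j:ℝ)+1)
      = if M = 1 then 1 else 0 := by
  have hsplit : ∀ j ∈ range (M+1), (M.choose j : ℝ) * (-1)^(j+1) * ((j:ℝ)+1)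
      = (M.choose j : ℝ) * (-1)^(j+1) * (j:ℝ) + (-((M.choose j : ℝ) * (-1)^j)) := by
    intro j _
    rw [pow_succ]
    ring
  rw [Finset.sum_congr rfl hsplit, Finset.sum_add_distrib]
  have h1 : ∑ j ∈ range (M+1), (-((M.choose j : ℝ) * (-1)^j))
      = -(if M = 0 then (1:ℝ) else 0) := by
    rw [Finset.sum_neg_distrib, qaux_alt]
  have h2 : ∑ j ∈ range (M+1), (M.choose j : ℝ) * (-1)^(j+1) * (j:ℝ)
      = if M = 1 then 1 else 0 := by
    rw [Finset.sum_range_succ']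
    simp only [Nat.cast_add, Nat.cast_one, Nat.cast_zero, mul_zero, add_zero]
    have hterm : ∀ i ∈ range M, (M.choose (i+1) : ℝ) * (-1)^(i+1+1) * ((i:ℝ)+1)
        = (M:ℝ) * ((M-1).choose i : ℝ) * (-1)^i := by
      intro i _
      have hn := Nat.add_one_mul_choose_eq (M-1) i
      rw [Nat.sub_add_cancel hM] at hn
      have hnR : (M:ℝ) * ((M-1).choose i : ℝ) = (M.choose (i+1) : ℝ) * ((i:ℝ)+1) := by
        exact_mod_cast hn
      calc (M.choose (i+1) : ℝ) * (-1)^(i+1+1) * ((i:ℝ)+1)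
          = ((M.choose (i+1) : ℝ) * ((i:ℝ)+1)) * (-1)^(i+1+1) := by ring
        _ = ((M:ℝ) * ((M-1).choose i : ℝ)) * (-1)^(i+1+1) := by rw [hnR]
        _ = (M:ℝ) * ((M-1).choose i : ℝ) * (-1)^i := by
            rw [pow_add]; ring
    rw [Finset.sum_congr rfl hterm]
    have : ∑ i ∈ range M, (M:ℝ) * ((M-1).choose i : ℝ) * (-1)^i
        = (M:ℝ) * ∑ i ∈ range ((M-1)+1), ((M-1).choose i : ℝ) * (-1)^i := by
      rw [Nat.sub_add_cancel hM, Finset.mul_sum]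
      exact Finset.sum_congr rfl fun i _ => by ring
    rw [this, qaux_alt]
    rcases eq_or_ne M 1 with rfl | hM1
    · norm_num
    · rw [if_neg (show ¬ M - 1 = 0 by omega), if_neg hM1, mul_zero]
  rw [h1, h2, if_neg (show ¬ M = 0 by omega)]
  ring

lemma qaux_triangle (m : ℕ) (f : ℕ → ℕ → ℝ) :
    ∑ i ∈ range (m+1), ∑ j ∈ range (i+1), f i j
      = ∑ j ∈ range (m+1), ∑ l ∈ range (m+1-j), f (j+l) j := by
  have h1 : ∀ i ∈ range (m+1), ∑ j ∈ range (i+1), f i j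
      = ∑ j ∈ range (i+1), (fun j l => f (j+l) j) j (i - j) := by
    intro i _
    refine Finset.sum_congr rfl fun j hj => ?_
    have hj' : j + (i - j) = i := Nat.add_sub_cancel' (Nat.lt_succ_iff.mp (mem_range.mp hj))
    simp only [hj']
  rw [Finset.sum_congr rfl h1]
  exact Finset.sum_range_diag_flip (m+1) fun j l => f (j+l) j



/-- Closed form of the Bernoulli–Carlitz fractions. -/
noncomputable def Bcar (q : ℝ) (i : ℕ) : ℝ :=
  (∑ j ∈ Finset.range (i+1),
    (i.choose j : ℝ) * (-1)^j * (((j:ℝ)+1) / (1 - q^(j+1)))) * (1-q) / (1-q)^i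

lemma qaux_powlt {q : ℝ} (hq0 : 0 < q) (hq1 : q < 1) (M : ℕ) : 0 < 1 - q^(M+1) := by
  have : q^(M+1) < 1 := pow_lt_one₀ hq0.le hq1 (Nat.succ_ne_zero M)
  linarith

lemma qaux_Bsum {q : ℝ} (hq0 : 0 < q) (hq1 : q < 1) (m : ℕ) :
    ∑ i ∈ range (m+1), (m.choose i : ℝ) * (q-1)^i * Bcar q i
      = ((m:ℝ)+1) * (1-q) / (1 - q^(m+1)) := by
  have hq' : (1:ℝ) - q ≠ 0 := by linarith
  have step1 : ∀ i ∈ range (m+1), (m.choose i : ℝ) * (q-1)^i * Bcar q i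
      = ∑ j ∈ range (i+1), (m.choose i : ℝ) * (i.choose j : ℝ) * (-1)^i * (-1)^j
          * (((j:ℝ)+1) / (1 - q^(j+1))) * (1-q) := by
    intro i _
    unfold Bcar
    rw [Finset.sum_mul, Finset.sum_div, Finset.mul_sum]
    refine Finset.sum_congr rfl fun j _ => ?_
    have hpi : ((1:ℝ)-q)^i ≠ 0 := pow_ne_zero _ hq'
    have hneg : (q-1:ℝ)^i = (-1)^i * (1-q)^i := by
      rw [show q - 1 = (-1) * (1-q) from by ring, mul_pow]
    calc (m.choose i : ℝ) * (q-1)^i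
          * ((i.choose j : ℝ) * (-1)^j * (((j:ℝ)+1) / (1 - q^(j+1))) * (1-q) / (1-q)^i)
        = ((m.choose i : ℝ) * (i.choose j : ℝ) * (-1)^i * (-1)^j
            * (((j:ℝ)+1) / (1 - q^(j+1))) * (1-q)) * ((1-q)^i / (1-q)^i) := by
          rw [hneg]; ring
      _ = _ := by rw [div_self hpi, mul_one]
  rw [Finset.sum_congr rfl step1]
  rw [qaux_triangle m (fun i j => (m.choose i : ℝ) * (i.choose j : ℝ) * (-1)^i * (-1)^j
          * (((j:ℝ)+1) / (1 - q^(j+1))) * (1-q))]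
  have step2 : ∀ j ∈ range (m+1),
      (∑ l ∈ range (m+1-j), (m.choose (j+l) : ℝ) * ((j+l).choose j : ℝ) * (-1)^(j+l) * (-1)^j
          * (((j:ℝ)+1) / (1 - q^(j+1))) * (1-q))
      = if j = m then ((m:ℝ)+1) * (1-q) / (1 - q^(m+1)) else 0 := by
    intro j hj
    have hjm : j ≤ m := Nat.lt_succ_iff.mp (mem_range.mp hj)
    have hinner : ∀ l ∈ range (m+1-j),
        (m.choose (j+l) : ℝ) * ((j+l).choose j : ℝ) * (-1)^(j+l) * (-1)^j
          * (((j:ℝ)+1) / (1 - q^(j+1))) * (1-q)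
        = ((m.choose j : ℝ) * (((j:ℝ)+1) / (1 - q^(j+1))) * (1-q))
            * (((m-j).choose l : ℝ) * (-1)^l) := by
      intro l hl
      have hlm : j + l ≤ m := by
        have := mem_range.mp hl; omega
      have hcm := Nat.choose_mul (n := m) (k := j+l) (s := j) (Nat.le_add_right j l)
      have hcmR : (m.choose (j+l) : ℝ) * ((j+l).choose j : ℝ)
          = (m.choose j : ℝ) * ((m-j).choose (j+l-j) : ℝ) := by exact_mod_cast hcm
      rw [hcmR, show j + l - j = l from by omega, pow_add]
      have hsq : ((-1:ℝ))^j * (-1)^j = 1 := by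
        rw [← pow_add, ← two_mul, pow_mul]; norm_num
      calc (m.choose j : ℝ) * ((m-j).choose l : ℝ) * ((-1)^j * (-1)^l) * (-1)^j
            * (((j:ℝ)+1) / (1 - q^(j+1))) * (1-q)
          = ((m.choose j : ℝ) * (((j:ℝ)+1) / (1 - q^(j+1))) * (1-q))
            * (((m-j).choose l : ℝ) * (-1)^l) * ((-1:ℝ)^j * (-1)^j) := by ring
        _ = _ := by rw [hsq, mul_one]
    rw [Finset.sum_congr rfl hinner, ← Finset.mul_sum,
      show m + 1 - j = (m-j) + 1 from by omega, qaux_alt]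
    rcases eq_or_ne j m with rfl | hjne
    · rw [Nat.sub_self, if_pos rfl, if_pos rfl, mul_one, Nat.choose_self]
      push_cast; ring
    · rw [if_neg (show ¬ m - j = 0 by omega), if_neg hjne, mul_zero]
  rw [Finset.sum_congr rfl step2, Finset.sum_ite_eq' (range (m+1)) m]
  simp

lemma qaux_geom_binom (r : ℝ) (M : ℕ) :
    ∑ l ∈ range (M+1), ((M.choose l : ℝ)) * r^l = (r+1)^M := by
  rw [add_pow]
  exact Finset.sum_congr rfl fun l _ => by rw [one_pow]; ring

lemma qaux_Brec {q : ℝ} (hq0 : 0 < q) (hq1 : q < 1) (m : ℕ) (hm : 1 ≤ m) :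
    q * (∑ i ∈ range (m + 1), (m.choose i : ℝ) * q ^ i * Bcar q i) - Bcar q m
      = if m = 1 then 1 else 0 := by
  have hq' : (1:ℝ) - q ≠ 0 := by linarith
  have step1 : ∀ i ∈ range (m+1), (m.choose i : ℝ) * q ^ i * Bcar q i
      = ∑ j ∈ range (i+1), (m.choose i : ℝ) * (i.choose j : ℝ) * (-1)^j
          * (((j:ℝ)+1) / (1 - q^(j+1))) * (1-q) * (q/(1-q))^i := by
    intro i _
    unfold Bcar
    rw [Finset.sum_mul, Finset.sum_div, Finset.mul_sum]
    refine Finset.sum_congr rfl fun j _ => ?_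
    rw [div_pow, div_eq_mul_inv (q^i), div_eq_mul_inv]
    ring
  rw [Finset.sum_congr rfl step1]
  rw [qaux_triangle m (fun i j => (m.choose i : ℝ) * (i.choose j : ℝ) * (-1)^j
          * (((j:ℝ)+1) / (1 - q^(j+1))) * (1-q) * (q/(1-q))^i)]
  have step2 : ∀ j ∈ range (m+1),
      (∑ l ∈ range (m+1-j), (m.choose (j+l) : ℝ) * ((j+l).choose j : ℝ) * (-1)^j
          * (((j:ℝ)+1) / (1 - q^(j+1))) * (1-q) * (q/(1-q))^(j+l))
      = (m.choose j : ℝ) * (-1)^j * (((j:ℝ)+1) / (1 - q^(j+1))) * (1-q) * q^j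
          * ((1-q)^m)⁻¹ := by
    intro j hj
    have hjm : j ≤ m := Nat.lt_succ_iff.mp (mem_range.mp hj)
    have hinner : ∀ l ∈ range (m+1-j),
        (m.choose (j+l) : ℝ) * ((j+l).choose j : ℝ) * (-1)^j
          * (((j:ℝ)+1) / (1 - q^(j+1))) * (1-q) * (q/(1-q))^(j+l)
        = ((m.choose j : ℝ) * (-1)^j * (((j:ℝ)+1) / (1 - q^(j+1))) * (1-q)
            * (q/(1-q))^j) * (((m-j).choose l : ℝ) * (q/(1-q))^l) := by
      intro l hl
      have hlm : j + l ≤ m := by have := mem_range.mp hl; omega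
      have hcm := Nat.choose_mul (n := m) (k := j+l) (s := j) (Nat.le_add_right j l)
      have hcmR : (m.choose (j+l) : ℝ) * ((j+l).choose j : ℝ)
          = (m.choose j : ℝ) * ((m-j).choose (j+l-j) : ℝ) := by exact_mod_cast hcm
      rw [hcmR, show j + l - j = l from by omega, pow_add]
      ring
    rw [Finset.sum_congr rfl hinner, ← Finset.mul_sum,
      show m + 1 - j = (m-j) + 1 from by omega, qaux_geom_binom]
    have hr1 : q/(1-q) + 1 = 1/(1-q) := by field_simp; ring
    have e1 : (q/(1-q))^j = q^j * ((1-q)^j)⁻¹ := by rw [div_pow, div_eq_mul_inv]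
    have e2 : ((1:ℝ)/(1-q))^(m-j) = ((1-q)^(m-j))⁻¹ := by rw [one_div, inv_pow]
    have e3 : ((1-q)^j)⁻¹ * ((1-q)^(m-j))⁻¹ = (((1:ℝ)-q)^m)⁻¹ := by
      rw [← mul_inv, ← pow_add, Nat.add_sub_cancel' hjm]
    calc ((m.choose j : ℝ) * (-1)^j * (((j:ℝ)+1) / (1 - q^(j+1))) * (1-q)
            * (q/(1-q))^j) * (q/(1-q) + 1)^(m-j)
        = ((m.choose j : ℝ) * (-1)^j * (((j:ℝ)+1) / (1 - q^(j+1))) * (1-q)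
            * (q/(1-q))^j) * (1/(1-q))^(m-j) := by rw [hr1]
      _ = (m.choose j : ℝ) * (-1)^j * (((j:ℝ)+1) / (1 - q^(j+1))) * (1-q) * q^j
            * (((1-q)^j)⁻¹ * ((1-q)^(m-j))⁻¹) := by rw [e1, e2]; ring
      _ = _ := by rw [e3]
  rw [Finset.sum_congr rfl step2]
  have hBm : Bcar q m = ∑ j ∈ range (m+1),
      (m.choose j : ℝ) * (-1)^j * (((j:ℝ)+1) / (1 - q^(j+1))) * (1-q) * ((1-q)^m)⁻¹ := by
    unfold Bcar
    rw [Finset.sum_mul, Finset.sum_div]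
    refine Finset.sum_congr rfl fun j _ => ?_
    rw [div_eq_mul_inv]
  rw [hBm, Finset.mul_sum, ← Finset.sum_sub_distrib]
  have step3 : ∀ j ∈ range (m+1),
      q * ((m.choose j : ℝ) * (-1)^j * (((j:ℝ)+1) / (1 - q^(j+1))) * (1-q) * q^j
          * ((1-q)^m)⁻¹)
        - (m.choose j : ℝ) * (-1)^j * (((j:ℝ)+1) / (1 - q^(j+1))) * (1-q) * ((1-q)^m)⁻¹
      = ((m.choose j : ℝ) * (-1)^(j+1) * ((j:ℝ)+1)) * ((1-q) * ((1-q)^m)⁻¹) := by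
    intro j _
    have hpj := qaux_powlt hq0 hq1 j
    have hd : ((j:ℝ)+1)/(1-q^(j+1)) * (q^(j+1) - 1) = -((j:ℝ)+1) := by
      rw [div_mul_eq_mul_div, div_eq_iff (by linarith : (1:ℝ) - q^(j+1) ≠ 0)]
      ring
    linear_combination ((m.choose j : ℝ) * (-1)^j * (1-q) * ((1-q)^m)⁻¹) * hd
  rw [Finset.sum_congr rfl step3, ← Finset.sum_mul, qaux_alt' m hm]
  rcases eq_or_ne m 1 with rfl | hm1
  · simp [mul_inv_cancel₀ hq']
  · simp [hm1]

lemma qaux_beta {q : ℝ} (hq0 : 0 < q) (hq1 : q < 1) (β : ℕ → ℝ) (h0 : β 0 = 1)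
    (hrec : ∀ m : ℕ, 1 ≤ m →
      q * (∑ i ∈ Finset.range (m + 1), (m.choose i : ℝ) * q ^ i * β i) - β m
        = if m = 1 then 1 else 0) :
    ∀ i, β i = Bcar q i := by
  intro i
  induction i using Nat.strong_induction_on with
  | _ i IH =>
    rcases Nat.eq_zero_or_pos i with rfl | hi
    · rw [h0]
      unfold Bcar
      have hq' : (1:ℝ) - q ≠ 0 := by linarith
      simp only [Finset.range_one, Finset.sum_singleton, Nat.choose_self, Nat.cast_one,
        pow_zero, Nat.cast_zero, one_mul, zero_add, pow_one, div_one, mul_one]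
      field_simp
    · have h1 := hrec i hi
      have h2 := qaux_Brec hq0 hq1 i hi
      have hsums : ∑ i' ∈ range (i+1), (i.choose i' : ℝ) * q ^ i' * β i'
          = (∑ i' ∈ range i, (i.choose i' : ℝ) * q ^ i' * Bcar q i') + q^i * β i := by
        rw [Finset.sum_range_succ, Nat.choose_self]
        congr 1
        · exact Finset.sum_congr rfl fun j hj => by rw [IH j (mem_range.mp hj)]
        · push_cast; ring
      have hsums2 : ∑ i' ∈ range (i+1), (i.choose i' : ℝ) * q ^ i' * Bcar q i'
          = (∑ i' ∈ range i, (i.choose i' : ℝ) * q ^ i' * Bcar q i') + q^i * Bcar q i := by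
        rw [Finset.sum_range_succ, Nat.choose_self]
        push_cast; ring
      rw [hsums] at h1
      rw [hsums2] at h2
      have hkey : (q^(i+1) - 1) * (β i - Bcar q i) = 0 := by
        linear_combination h1 - h2
      have hne : q^(i+1) - 1 ≠ 0 := by
        have := qaux_powlt hq0 hq1 i
        intro h; rw [sub_eq_zero] at h; rw [h] at this; linarith
      have := (mul_eq_zero.mp hkey).resolve_left hne
      linarith [this]



/-- coefficients of the polynomial `[y]^n (q^y - (n+1) q^{2y})` in `q^y`, for `n = N+1` -/
noncomputable def ccoef (q : ℝ) (N m : ℕ) : ℝ :=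
  (-1:ℝ)^(N+m) * (((N+1).choose m : ℝ)) * ((m:ℝ)+1) / (q-1)^N

noncomputable def acoef (q : ℝ) (N j : ℕ) : ℝ :=
  (N.choose j : ℝ) * ((-1)^N * (-1)^j) / (q-1)^N

lemma qaux_claimD {q : ℝ} (N : ℕ) (Y : ℝ) :
    ((Y-1)/(q-1))^N * (Y - ((N:ℝ)+2)*Y^2)
      = ∑ m ∈ range (N+2), ccoef q N m * Y^(m+1) := by
  have hL : ((Y-1)/(q-1))^N * (Y - ((N:ℝ)+2)*Y^2)
      = ∑ j ∈ range (N+1),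
          (acoef q N j * Y^(j+1) + (-((N:ℝ)+2)) * (acoef q N j * Y^(j+2))) := by
    rw [div_pow, qaux_expand N Y, Finset.sum_div, Finset.sum_mul]
    refine Finset.sum_congr rfl fun j _ => ?_
    simp only [acoef]
    ring
  have hR : ∀ m ∈ range (N+2), ccoef q N m * Y^(m+1)
      = acoef q N m * Y^(m+1)
        + (if m = 0 then 0 else (-((N:ℝ)+2)) * (acoef q N (m-1) * Y^(m+1))) := by
    intro m _
    rcases m with _ | i
    · norm_num [ccoef, acoef]
    · rw [if_neg (Nat.succ_ne_zero i), Nat.succ_sub_one]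
      have h1 := Nat.add_one_mul_choose_eq N i
      have h1R : ((N:ℝ)+1) * (N.choose i : ℝ) = ((N+1).choose (i+1) : ℝ) * ((i:ℝ)+1) := by
        exact_mod_cast h1
      have h2 := Nat.choose_succ_succ N i
      have h2R : ((N+1).choose (i+1) : ℝ) = (N.choose i : ℝ) + (N.choose (i+1) : ℝ) := by
        exact_mod_cast h2
      simp only [ccoef, acoef]
      have hw : ∀ A C0 C1 : ℝ, ((N:ℝ)+1) * C0 = A * ((i:ℝ)+1) → A = C0 + C1 →
          (-1:ℝ)^(N+(i+1)) * A * ((i:ℝ)+1+1) / (q-1)^N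
          = C1 * ((-1)^N * (-1)^(i+1)) / (q-1)^N * 1
            + (-((N:ℝ)+2)) * (C0 * ((-1)^N * (-1)^i) / (q-1)^N * 1) := by
        intro A C0 C1 e1 e2
        have hps1 : (-1:ℝ)^(N+(i+1)) = -((-1)^N * (-1)^i) := by
          rw [pow_add, pow_succ]; ring
        have hps2 : (-1:ℝ)^(i+1) = -(-1)^i := by rw [pow_succ]; ring
        rw [hps1, hps2]
        linear_combination (-((-1:ℝ)^N * (-1)^i / (q-1)^N)) * e2
          + (((-1:ℝ)^N * (-1)^i / (q-1)^N)) * e1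
      have := hw ((N+1).choose (i+1) : ℝ) (N.choose i : ℝ) (N.choose (i+1) : ℝ) h1R h2R
      push_cast at this ⊢
      linear_combination (Y^(i+1+1)) * this
  rw [hL, Finset.sum_congr rfl hR, Finset.sum_add_distrib, Finset.sum_add_distrib,
    show N+2 = N+1+1 from rfl,
    Finset.sum_range_succ (fun m => acoef q N m * Y^(m+1)) (N+1),
    Finset.sum_range_succ' (fun m => if m = 0 then (0:ℝ)
      else (-((N:ℝ)+2)) * (acoef q N (m-1) * Y^(m+1))) (N+1)]
  have hz : acoef q N (N+1) = 0 := by simp [acoef, Nat.choose_succ_self]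
  rw [hz]
  have hshift : ∀ i ∈ range (N+1),
      (if i+1 = 0 then (0:ℝ) else (-((N:ℝ)+2)) * (acoef q N (i+1-1) * Y^(i+1+1)))
      = (-((N:ℝ)+2)) * (acoef q N i * Y^(i+2)) := by
    intro i _
    rw [if_neg (Nat.succ_ne_zero i), Nat.succ_sub_one]
  rw [Finset.sum_congr rfl hshift]
  norm_num

lemma qaux_claimC {q : ℝ} (hq0 : 0 < q) (hq1 : q < 1) (β : ℕ → ℝ)
    (hB : ∀ i, β i = Bcar q i) (N : ℕ) (Z : ℝ) :
    Z * (∑ i ∈ range (N+2), ((N+1).choose i : ℝ) * Z^i * β i * ((Z-1)/(q-1))^(N+1-i))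
      = ∑ m ∈ range (N+2), ccoef q N m * Z^(m+1) * (1 - q^(m+1))⁻¹ := by
  have hqne : q - 1 ≠ 0 := by intro h; nlinarith [h]
  have step1 : ∀ i ∈ range (N+2),
      ((N+1).choose i : ℝ) * Z^i * β i * ((Z-1)/(q-1))^(N+1-i)
      = ∑ l ∈ range (N+2-i), ((N+1).choose i : ℝ) * ((N+1-i).choose l : ℝ)
          * (-1)^(N+1) * (-1)^i * (-1)^l * (q-1)^i * β i * Z^(i+l) / (q-1)^(N+1) := by
    intro i hi
    have hiN : i ≤ N+1 := by have := mem_range.mp hi; omega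
    rw [div_pow, qaux_expand (N+1-i) Z, Finset.sum_div, Finset.mul_sum,
      show N+1-i+1 = N+2-i from by omega]
    refine Finset.sum_congr rfl fun l _ => ?_
    rw [qaux_sign hiN,
      show ((q-1):ℝ)^(N+1) = (q-1)^(N+1-i) * (q-1)^i from by rw [← pow_add]; congr 1; omega]
    have h1 : ((q-1):ℝ)^(N+1-i) ≠ 0 := pow_ne_zero _ hqne
    have h2 : ((q-1):ℝ)^i ≠ 0 := pow_ne_zero _ hqne
    rw [pow_add Z i l]
    field_simp
  rw [Finset.sum_congr rfl step1, ← Finset.sum_range_diag_flip (N+2)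
    (fun i l => ((N+1).choose i : ℝ) * ((N+1-i).choose l : ℝ)
      * (-1)^(N+1) * (-1)^i * (-1)^l * (q-1)^i * β i * Z^(i+l) / (q-1)^(N+1))]
  have step2 : ∀ m ∈ range (N+2),
      (∑ i ∈ range (m+1), ((N+1).choose i : ℝ) * ((N+1-i).choose (m-i) : ℝ)
          * (-1)^(N+1) * (-1)^i * (-1)^(m-i) * (q-1)^i * β i * Z^(i+(m-i)) / (q-1)^(N+1))
      = ccoef q N m * Z^m * (1 - q^(m+1))⁻¹ := by
    intro m hm
    have hmN : m ≤ N+1 := by have := mem_range.mp hm; omega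
    have hin : ∀ i ∈ range (m+1),
        ((N+1).choose i : ℝ) * ((N+1-i).choose (m-i) : ℝ)
          * (-1)^(N+1) * (-1)^i * (-1)^(m-i) * (q-1)^i * β i * Z^(i+(m-i)) / (q-1)^(N+1)
        = ((-1)^(N+1) * (-1)^m * Z^m * (((N+1).choose m : ℝ)) / (q-1)^(N+1))
            * ((m.choose i : ℝ) * (q-1)^i * Bcar q i) := by
      intro i hi
      have him : i ≤ m := Nat.lt_succ_iff.mp (mem_range.mp hi)
      have hcm := Nat.choose_mul (n := N+1) (k := m) (s := i) him
      have hcmR : ((N+1).choose i : ℝ) * ((N+1-i).choose (m-i) : ℝ)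
          = ((N+1).choose m : ℝ) * (m.choose i : ℝ) := by exact_mod_cast hcm.symm
      have hsq : ((-1:ℝ))^i * (-1)^i = 1 := by
        rw [← pow_add, ← two_mul, pow_mul]; norm_num
      rw [hcmR, qaux_sign him, Nat.add_sub_cancel' him, ← hB i]
      calc ((N+1).choose m : ℝ) * (m.choose i : ℝ)
            * (-1)^(N+1) * (-1)^i * ((-1)^m * (-1)^i) * (q-1)^i * β i * Z^m / (q-1)^(N+1)
          = (((-1)^(N+1) * (-1)^m * Z^m * (((N+1).choose m : ℝ)) / (q-1)^(N+1))
              * ((m.choose i : ℝ) * (q-1)^i * β i)) * ((-1:ℝ)^i * (-1)^i) := by ring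
        _ = _ := by rw [hsq, mul_one]
    rw [Finset.sum_congr rfl hin, ← Finset.mul_sum]
    have hBsum : ∑ i ∈ range (m+1), (m.choose i : ℝ) * (q-1)^i * Bcar q i
        = ((m:ℝ)+1) * (1-q) / (1 - q^(m+1)) := qaux_Bsum hq0 hq1 m
    rw [hBsum]
    have hne : (1:ℝ) - q^(m+1) ≠ 0 := by have := qaux_powlt hq0 hq1 m; linarith
    simp only [ccoef]
    have hps : ((-1:ℝ))^(N+1) = -(-1)^N := by rw [pow_succ]; ring
    rw [hps]
    field_simp
    ring
  rw [Finset.sum_congr rfl step2, Finset.mul_sum]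
  exact Finset.sum_congr rfl fun m _ => by ring


end QAux


/-- The Hurwitz `q`-Zeta operator at the exponent `s = 1 − n`:
`ζ_q(1−n, x) f (q) = Σ_{k≥0} [k+x]^{n−1} f(q^{k+x})`. -/
noncomputable def hurwitzZetaQR (q : ℝ) (n : ℕ) (x : ℝ) (f : ℝ → ℝ) : ℝ :=
  ∑' k : ℕ, qNumR q ((k : ℝ) + x) ^ ((n : ℤ) - 1) * f (q ^ ((k : ℝ) + x))

/-- for `n ≥ 0` and positive rational `x`,
`q^x β_n(x) = ζ_q(1−n, x)(q − (n+1)q²) = Σ_{k≥0} [k+x]^{n−1}(q^{k+x} − (n+1) q^{2(k+x)})`,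
where `β_n(x) = Σ_{i=0}^n C(n,i) q^{ix} β_i [x]^{n−i}` and `β_i` are the
Bernoulli–Carlitz fractions. -/
theorem qBernoullipoly_eq_hurwitzZetaQ (q : ℝ) (hq : q ∈ Set.Ioo (0 : ℝ) 1)
    (β : ℕ → ℝ) (h0 : β 0 = 1)
    (hrec : ∀ m : ℕ, 1 ≤ m →
      q * (∑ i ∈ Finset.range (m + 1), (m.choose i : ℝ) * q ^ i * β i) - β m
        = if m = 1 then 1 else 0)
    (n : ℕ) (x : ℚ) (hx : 0 < x) :
    q ^ (x : ℝ) * (∑ i ∈ Finset.range (n + 1),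
        (n.choose i : ℝ) * q ^ ((i : ℝ) * x) * β i * qNumR q x ^ (n - i)) =
      hurwitzZetaQR q n x (fun y => y - ((n : ℝ) + 1) * y ^ 2) := by
  obtain ⟨hq0, hq1⟩ := hq
  have hq' : (1:ℝ) - q ≠ 0 := by linarith
  have hqne : q - 1 ≠ 0 := by intro h; apply hq'; linarith
  have hxR : (0:ℝ) < (x:ℝ) := by exact_mod_cast hx
  have hZpos : 0 < q ^ (x:ℝ) := Real.rpow_pos_of_pos hq0 _
  have hYk : ∀ k : ℕ, q ^ ((k:ℝ) + (x:ℝ)) = q^k * q ^ (x:ℝ) := by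
    intro k
    rw [Real.rpow_add hq0, Real.rpow_natCast]
  have hqx : ∀ i:ℕ, q ^ ((i:ℝ)*(x:ℝ)) = (q ^ (x:ℝ))^i := by
    intro i
    rw [mul_comm, Real.rpow_mul hq0.le, Real.rpow_natCast]
  rcases n with _ | N
  · -- n = 0
    have hL : (∑ i ∈ Finset.range (0 + 1),
        ((0:ℕ).choose i : ℝ) * q ^ ((i:ℝ) * (x:ℝ)) * β i * qNumR q (x:ℝ) ^ (0 - i)) = 1 := by
      rw [Finset.sum_range_one]
      norm_num [h0]
    rw [hL, mul_one]
    unfold hurwitzZetaQR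
    have hterm : ∀ k : ℕ, qNumR q ((k:ℝ) + (x:ℝ)) ^ (((0:ℕ):ℤ) - 1)
        * ((q ^ ((k:ℝ) + (x:ℝ))) - (((0:ℕ):ℝ) + 1) * (q ^ ((k:ℝ) + (x:ℝ)))^2)
        = ((1-q) * q ^ (x:ℝ)) * q^k := by
      intro k
      have hY1 : q ^ ((k:ℝ) + (x:ℝ)) < 1 :=
        Real.rpow_lt_one hq0.le hq1 (by positivity)
      have hYne : q ^ ((k:ℝ) + (x:ℝ)) - 1 ≠ 0 := by intro h; apply hq'; nlinarith
      have hz : (((0:ℕ):ℤ) - 1) = (-1 : ℤ) := by norm_num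
      rw [hz, zpow_neg_one]
      have hq2 : qNumR q ((k:ℝ)+(x:ℝ)) = ((q ^ ((k:ℝ)+(x:ℝ))) - 1)/(q-1) := rfl
      rw [hq2, inv_div, div_mul_eq_mul_div, div_eq_iff hYne, hYk k]
      push_cast
      ring
    rw [tsum_congr hterm, tsum_mul_left,
      tsum_geometric_of_lt_one hq0.le hq1]
    field_simp
  · -- n = N+1
    have hbeta := qaux_beta hq0 hq1 β h0 hrec
    have hLHS : (∑ i ∈ Finset.range (N+1+1),
        ((N+1).choose i : ℝ) * q ^ ((i:ℝ) * (x:ℝ)) * β i * qNumR q (x:ℝ) ^ (N+1-i))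
        = ∑ i ∈ range (N+2), ((N+1).choose i : ℝ) * (q ^ (x:ℝ))^i * β i
            * ((q ^ (x:ℝ) - 1)/(q-1))^(N+1-i) := by
      refine Finset.sum_congr rfl fun i _ => ?_
      rw [hqx i]
      rfl
    have hRHS : hurwitzZetaQR q (N+1) x (fun y => y - ((↑(N+1):ℝ) + 1) * y ^ 2)
        = ∑ m ∈ range (N+2), ccoef q N m * (q ^ (x:ℝ))^(m+1) * (1 - q^(m+1))⁻¹ := by
      unfold hurwitzZetaQR
      have hterm : ∀ k:ℕ, qNumR q ((k:ℝ)+(x:ℝ)) ^ ((↑(N+1):ℤ)-1)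
          * ((q ^ ((k:ℝ)+(x:ℝ))) - ((↑(N+1):ℝ)+1) * (q ^ ((k:ℝ)+(x:ℝ)))^2)
          = ∑ m ∈ range (N+2),
              (ccoef q N m * (q ^ (x:ℝ))^(m+1)) * (q^(m+1))^k := by
        intro k
        have hze : ((↑(N+1):ℤ)-1) = ((N:ℕ):ℤ) := by push_cast; ring
        rw [hze, zpow_natCast]
        have hq2 : qNumR q ((k:ℝ)+(x:ℝ)) = ((q ^ ((k:ℝ)+(x:ℝ))) - 1)/(q-1) := rfl
        have hcast : ((↑(N+1):ℝ)+1) = (N:ℝ)+2 := by push_cast; ring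
        rw [hq2, hcast, qaux_claimD N (q ^ ((k:ℝ)+(x:ℝ)))]
        refine Finset.sum_congr rfl fun m _ => ?_
        rw [hYk k, mul_pow, ← pow_mul, mul_comm k (m+1), pow_mul]
        ring
      rw [tsum_congr hterm, Summable.tsum_finsetSum (fun m _ =>
        ((summable_geometric_of_lt_one (by positivity)
          (pow_lt_one₀ hq0.le hq1 (Nat.succ_ne_zero m))).mul_left _))]
      refine Finset.sum_congr rfl fun m _ => ?_
      rw [tsum_mul_left, tsum_geometric_of_lt_one (by positivity)
        (pow_lt_one₀ hq0.le hq1 (Nat.succ_ne_zero m))]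
    rw [hLHS, hRHS]
    exact qaux_claimC hq0 hq1 β hbeta N (q ^ (x:ℝ))
end

section
/- Let χ be a nontrivial Dirichlet character mod N and define the generalized Bernoulli–Carlitz fractions β_{χ,n} = Σ_{j=0}^{N−1} χ(j) [N]^{n−1} · (q^{j/N} β_n(j/N))|_{q→q^N}. Then for all n ≥ 0, β_{χ,n} = L_q(χ, 1−n)(q − (n+1)q²) = Σ_{m≥1} χ(m) [m]^{n−1} (q^m − (n+1) q^{2m}). -/
/-- The `q`-Bernoulli polynomial `β_n(x) = Σ_{i=0}^n C(n,i) q^{ix} β_i [x]^{n−i}` at a real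
`q`, built from the values `β_i` of the Bernoulli–Carlitz fractions at `q`. -/
noncomputable def qBernoulliPoly (q : ℝ) (β : ℕ → ℝ) (n : ℕ) (x : ℝ) : ℝ :=
  ∑ i ∈ Finset.range (n + 1), (n.choose i : ℝ) * q ^ ((i : ℝ) * x) * β i * qNumR q x ^ (n - i)

open Finset


private lemma qq_neg_one_pow_sub (a b : ℕ) (h : b ≤ a) :
    (-1 : ℝ) ^ (a - b) = (-1) ^ a * (-1) ^ b := by
  have h1 : (-1 : ℝ) ^ (a - b) * (-1) ^ b = (-1) ^ a := by
    rw [← pow_add, Nat.sub_add_cancel h]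
  have h2 : ((-1 : ℝ) ^ b) ^ 2 = 1 := by
    rw [← pow_mul, mul_comm b 2, pow_mul]; norm_num
  calc (-1 : ℝ) ^ (a - b) = (-1) ^ (a - b) * ((-1 : ℝ) ^ b) ^ 2 := by rw [h2, mul_one]
    _ = ((-1) ^ (a - b) * (-1) ^ b) * (-1) ^ b := by ring
    _ = (-1) ^ a * (-1) ^ b := by rw [h1]

private lemma qq_inner_sum (m l : ℕ) (hl : l ≤ m) (x y : ℝ) :
    ∑ i ∈ range (m + 1), (m.choose i : ℝ) * x ^ i * y ^ (m - i) *
      ((-1 : ℝ) ^ (i - l) * (i.choose l : ℝ))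
    = (m.choose l : ℝ) * x ^ l * (y - x) ^ (m - l) := by
  have hsub : Finset.Ico l (m+1) ⊆ range (m+1) := by
    rw [Finset.range_eq_Ico]; exact Finset.Ico_subset_Ico (Nat.zero_le l) le_rfl
  rw [← Finset.sum_subset hsub (by
    intro i hi hni
    have : i < l := by
      simp only [Finset.mem_Ico, Finset.mem_range] at *
      omega
    have : i.choose l = 0 := Nat.choose_eq_zero_of_lt this
    rw [this]; push_cast; ring)]
  rw [Finset.sum_Ico_eq_sum_range]
  have hml : m + 1 - l = (m - l) + 1 := by omega
  rw [hml]
  rw [show (y - x) ^ (m - l) = (-x + y) ^ (m - l) by ring_nf, add_pow, Finset.mul_sum]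
  refine Finset.sum_congr rfl ?_
  intro r hr
  rw [Finset.mem_range] at hr
  have hrml : r ≤ m - l := by omega
  have hc0 := Nat.choose_mul (n := m) (Nat.le_add_right l r)
  rw [Nat.add_sub_cancel_left] at hc0
  have hc : ((m.choose (l + r) : ℝ) * ((l + r).choose l : ℝ))
      = (m.choose l : ℝ) * ((m - l).choose r : ℝ) := by exact_mod_cast congrArg Nat.cast hc0
  rw [Nat.add_sub_cancel_left, show m - (l + r) = m - l - r from Nat.sub_add_eq m l r]
  rw [show ((-x) ^ r : ℝ) = (-1) ^ r * x ^ r from by rw [neg_pow]]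
  rw [pow_add]
  linear_combination ((-1 : ℝ)) ^ r * x ^ l * x ^ r * y ^ (m - l - r) * hc

private lemma qq_swap_binom (m : ℕ) (x y : ℝ) (c : ℕ → ℝ) :
    ∑ i ∈ range (m + 1), (m.choose i : ℝ) * x ^ i * y ^ (m - i) *
      (∑ l ∈ range (i + 1), (-1 : ℝ) ^ (i - l) * (i.choose l : ℝ) * c l)
    = ∑ l ∈ range (m + 1), (m.choose l : ℝ) * x ^ l * (y - x) ^ (m - l) * c l := by
  have step1 : ∀ i ∈ range (m+1),
      (m.choose i : ℝ) * x ^ i * y ^ (m - i) *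
        (∑ l ∈ range (i + 1), (-1 : ℝ) ^ (i - l) * (i.choose l : ℝ) * c l)
      = ∑ l ∈ range (m + 1), (m.choose i : ℝ) * x ^ i * y ^ (m - i) *
          ((-1 : ℝ) ^ (i - l) * (i.choose l : ℝ)) * c l := by
    intro i hi
    rw [Finset.mem_range] at hi
    rw [Finset.mul_sum]
    rw [Finset.sum_subset (Finset.range_subset_range.2 (by omega : i + 1 ≤ m + 1)) (by
      intro l hl hnl
      have : i < l := by simp only [Finset.mem_range] at *; omega
      rw [Nat.choose_eq_zero_of_lt this]; push_cast; ring)]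
    exact Finset.sum_congr rfl fun l _ => by ring
  rw [Finset.sum_congr rfl step1, Finset.sum_comm]
  refine Finset.sum_congr rfl ?_
  intro l hl
  rw [Finset.mem_range] at hl
  rw [← Finset.sum_mul, qq_inner_sum m l (by omega) x y]

private lemma qq_alt_sum (m : ℕ) (hm : 1 ≤ m) :
    ∑ l ∈ range (m + 1), (-1 : ℝ) ^ (m - l) * (m.choose l : ℝ) * ((l : ℝ) + 1)
    = if m = 1 then 1 else 0 := by
  have hsign : ∀ l ∈ range (m + 1), (-1 : ℝ) ^ (m - l) * (m.choose l : ℝ) * ((l : ℝ) + 1)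
      = (-1) ^ m * ((-1) ^ l * (m.choose l : ℝ) * ((l : ℝ) + 1)) := by
    intro l hl
    rw [Finset.mem_range] at hl
    rw [qq_neg_one_pow_sub m l (by omega)]; ring
  rw [Finset.sum_congr rfl hsign, ← Finset.mul_sum]
  have h1 : ∑ l ∈ range (m + 1), ((-1 : ℝ) ^ l * (m.choose l : ℝ) * ((l : ℝ) + 1))
      = (∑ l ∈ range (m + 1), (-1 : ℝ) ^ l * (m.choose l : ℝ))
        + ∑ l ∈ range (m + 1), (-1 : ℝ) ^ l * (l : ℝ) * (m.choose l : ℝ) := by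
    rw [← Finset.sum_add_distrib]
    exact Finset.sum_congr rfl fun l _ => by ring
  have h2 : (∑ l ∈ range (m + 1), (-1 : ℝ) ^ l * (m.choose l : ℝ)) = 0 := by
    have := Int.alternating_sum_range_choose (n := m)
    rw [if_neg (by omega)] at this
    exact_mod_cast congrArg (Int.cast : ℤ → ℝ) this
  have h3 : ∑ l ∈ range (m + 1), (-1 : ℝ) ^ l * (l : ℝ) * (m.choose l : ℝ)
      = -(m : ℝ) * (if m - 1 = 0 then 1 else 0) := by
    rw [Finset.sum_range_succ']
    simp only [Nat.cast_zero, mul_zero, zero_mul, add_zero]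
    have hsum : ∑ r ∈ range m, (-1 : ℝ) ^ (r + 1) * ((r : ℕ) + 1 : ℝ) * (m.choose (r + 1) : ℝ)
        = ∑ r ∈ range m, -(m : ℝ) * ((-1 : ℝ) ^ r * ((m - 1).choose r : ℝ)) := by
      refine Finset.sum_congr rfl fun r _ => ?_
      have hnat : m * (m - 1).choose r = m.choose (r + 1) * (r + 1) := by
        have := Nat.add_one_mul_choose_eq (m - 1) r
        rwa [Nat.sub_add_cancel hm] at this
      have hcast : (m : ℝ) * ((m - 1).choose r : ℝ) = (m.choose (r + 1) : ℝ) * ((r : ℝ) + 1) := by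
        exact_mod_cast congrArg Nat.cast hnat
      rw [pow_succ]
      linear_combination (-1 : ℝ) ^ r * hcast
    have hcastgoal : ∑ x ∈ range m, (-1 : ℝ) ^ (x + 1) * ((x : ℕ) + 1 : ℕ) * (m.choose (x + 1) : ℝ)
        = ∑ r ∈ range m, (-1 : ℝ) ^ (r + 1) * ((r : ℕ) + 1 : ℝ) * (m.choose (r + 1) : ℝ) := by
      refine Finset.sum_congr rfl fun r _ => ?_; push_cast; ring
    rw [hcastgoal, hsum, ← Finset.mul_sum]
    have hr : range m = range ((m - 1) + 1) := by congr 1; omega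
    rw [hr]
    have := Int.alternating_sum_range_choose (n := m - 1)
    have hre : (∑ l ∈ range ((m-1) + 1), (-1 : ℝ) ^ l * ((m-1).choose l : ℝ))
        = (if m - 1 = 0 then 1 else 0) := by
      exact_mod_cast congrArg (Int.cast : ℤ → ℝ) this
    rw [hre]
  rw [h1, h2, h3]
  rcases eq_or_ne m 1 with h | h
  · subst h; norm_num
  · rw [if_neg (by omega), if_neg h]; ring

private noncomputable def qqc (Q : ℝ) (l : ℕ) : ℝ := ((l : ℝ) + 1) * (Q - 1) / (Q ^ (l + 1) - 1)

private noncomputable def qqb (Q : ℝ) (m : ℕ) : ℝ :=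
  ∑ l ∈ range (m + 1), (-1 : ℝ) ^ (m - l) * (m.choose l : ℝ) * qqc Q l

private noncomputable def qqV (Q : ℝ) (m : ℕ) : ℝ := qqb Q m / (Q - 1) ^ m

private lemma qq_pow_ne_one {Q : ℝ} (hQ0 : 0 < Q) (hQ1 : Q < 1) (r : ℕ) (hr : 1 ≤ r) :
    Q ^ r - 1 ≠ 0 := by
  have : Q ^ r < 1 := pow_lt_one₀ hQ0.le hQ1 (by omega)
  intro h; nlinarith

private lemma qqc_mul {Q : ℝ} (hQ0 : 0 < Q) (hQ1 : Q < 1) (l : ℕ) :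
    qqc Q l * (Q ^ (l + 1) - 1) = ((l : ℝ) + 1) * (Q - 1) := by
  rw [qqc, div_mul_cancel₀ _ (qq_pow_ne_one hQ0 hQ1 (l + 1) (by omega))]

private lemma qq_Vrec {Q : ℝ} (hQ0 : 0 < Q) (hQ1 : Q < 1) (m : ℕ) (hm : 1 ≤ m) :
    Q * (∑ i ∈ range (m + 1), (m.choose i : ℝ) * Q ^ i * qqV Q i) - qqV Q m
      = if m = 1 then 1 else 0 := by
  have hQne : Q - 1 ≠ 0 := by intro h; nlinarith
  have hpow : ((Q - 1) ^ m : ℝ) ≠ 0 := pow_ne_zero _ hQne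
  apply mul_right_cancel₀ hpow
  have hterm : ∀ i ∈ range (m + 1),
      ((m.choose i : ℝ) * Q ^ i * qqV Q i) * (Q - 1) ^ m
      = (m.choose i : ℝ) * Q ^ i * (Q - 1) ^ (m - i) * qqb Q i := by
    intro i hi
    rw [Finset.mem_range] at hi
    rw [qqV, show (Q - 1) ^ m = (Q - 1) ^ i * (Q - 1) ^ (m - i) from by
      rw [← pow_add]; congr 1; omega]
    field_simp
  have hswap := qq_swap_binom m Q (Q - 1) (qqc Q)
  have hswap' : ∑ i ∈ range (m + 1), (m.choose i : ℝ) * Q ^ i * (Q - 1) ^ (m - i) * qqb Q i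
      = ∑ l ∈ range (m + 1), (m.choose l : ℝ) * Q ^ l * (-1 : ℝ) ^ (m - l) * qqc Q l := by
    calc ∑ i ∈ range (m + 1), (m.choose i : ℝ) * Q ^ i * (Q - 1) ^ (m - i) * qqb Q i
        = ∑ i ∈ range (m + 1), (m.choose i : ℝ) * Q ^ i * (Q - 1) ^ (m - i) *
            (∑ l ∈ range (i + 1), (-1 : ℝ) ^ (i - l) * (i.choose l : ℝ) * qqc Q l) := rfl
      _ = ∑ l ∈ range (m + 1), (m.choose l : ℝ) * Q ^ l * ((Q - 1) - Q) ^ (m - l) * qqc Q l :=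
          hswap
      _ = ∑ l ∈ range (m + 1), (m.choose l : ℝ) * Q ^ l * (-1 : ℝ) ^ (m - l) * qqc Q l := by
          refine Finset.sum_congr rfl fun l _ => ?_
          norm_num
  have key : (Q * (∑ i ∈ range (m + 1), (m.choose i : ℝ) * Q ^ i * qqV Q i) - qqV Q m)
        * (Q - 1) ^ m
      = Q * (∑ l ∈ range (m + 1), (m.choose l : ℝ) * Q ^ l * (-1 : ℝ) ^ (m - l) * qqc Q l)
        - qqb Q m := by
    rw [sub_mul, mul_assoc, Finset.sum_mul, Finset.sum_congr rfl hterm, hswap',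
      qqV, div_mul_cancel₀ _ hpow]
  rw [key, qqb, Finset.mul_sum, ← Finset.sum_sub_distrib]
  have hcomb : ∀ l ∈ range (m + 1),
      Q * ((m.choose l : ℝ) * Q ^ l * (-1 : ℝ) ^ (m - l) * qqc Q l)
        - (-1 : ℝ) ^ (m - l) * (m.choose l : ℝ) * qqc Q l
      = (Q - 1) * ((-1 : ℝ) ^ (m - l) * (m.choose l : ℝ) * ((l : ℝ) + 1)) := by
    intro l _
    have := qqc_mul hQ0 hQ1 l
    have hql : Q * Q ^ l = Q ^ (l + 1) := by rw [pow_succ]; ring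
    calc Q * ((m.choose l : ℝ) * Q ^ l * (-1 : ℝ) ^ (m - l) * qqc Q l)
          - (-1 : ℝ) ^ (m - l) * (m.choose l : ℝ) * qqc Q l
        = (-1 : ℝ) ^ (m - l) * (m.choose l : ℝ) * (qqc Q l * (Q ^ (l + 1) - 1)) := by
          rw [← hql]; ring
      _ = (Q - 1) * ((-1 : ℝ) ^ (m - l) * (m.choose l : ℝ) * ((l : ℝ) + 1)) := by
          rw [this]; ring
  rw [Finset.sum_congr rfl ((by intro l hl; rw [show Q * ((m.choose l : ℝ) * Q ^ l * (-1:ℝ) ^ (m-l) * qqc Q l) - (-1:ℝ) ^ (m-l) * (m.choose l : ℝ) * qqc Q l = (Q-1) * ((-1:ℝ) ^ (m-l) * (m.choose l : ℝ) * ((l:ℝ)+1)) from hcomb l hl]) :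
    ∀ l ∈ range (m+1), Q * ((m.choose l : ℝ) * Q ^ l * (-1:ℝ) ^ (m-l) * qqc Q l) - (-1:ℝ) ^ (m-l) * (m.choose l : ℝ) * qqc Q l = (Q-1) * ((-1:ℝ) ^ (m-l) * (m.choose l : ℝ) * ((l:ℝ)+1)))]
  rw [← Finset.mul_sum, qq_alt_sum m hm]
  rcases eq_or_ne m 1 with h | h
  · subst h; norm_num
  · rw [if_neg h]; ring

private lemma qq_betaN_eq {Q : ℝ} (hQ0 : 0 < Q) (hQ1 : Q < 1) (βN : ℕ → ℝ) (h0 : βN 0 = 1)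
    (hrec : ∀ m : ℕ, 1 ≤ m →
      Q * (∑ i ∈ range (m + 1), (m.choose i : ℝ) * Q ^ i * βN i) - βN m
        = if m = 1 then 1 else 0) :
    ∀ m, βN m = qqV Q m := by
  have hQne : Q - 1 ≠ 0 := by intro h; nlinarith
  intro m
  induction m using Nat.strong_induction_on with
  | _ m ih =>
    rcases m with _ | m
    · have hc : qqc Q 0 = 1 := by
        rw [qqc, pow_one]; norm_num; exact hQne
      rw [h0, qqV, qqb]
      rw [Finset.range_one, Finset.sum_singleton, hc]
      norm_num
    · have hm : 1 ≤ m + 1 := by omega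
      have h1 := hrec (m + 1) hm
      have h2 := qq_Vrec hQ0 hQ1 (m + 1) hm
      have hsum : ∀ i ∈ range (m + 1),
          ((m+1).choose i : ℝ) * Q ^ i * βN i = ((m+1).choose i : ℝ) * Q ^ i * qqV Q i := by
        intro i hi
        rw [Finset.mem_range] at hi
        rw [ih i (by omega)]
      rw [Finset.sum_range_succ] at h1 h2
      rw [Finset.sum_congr rfl hsum] at h1
      have hne : Q * Q ^ (m + 1) - 1 ≠ 0 := by
        have := qq_pow_ne_one hQ0 hQ1 (m + 2) (by omega)
        rw [pow_succ] at this
        intro h; apply this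
        have : Q ^ (m + 1) * Q = Q * Q ^ (m + 1) := by ring
        rw [this, h]
      have hz : (Q * Q ^ (m + 1) - 1) * (βN (m + 1) - qqV Q (m + 1)) = 0 := by
        have hch : (((m+1).choose (m+1) : ℕ) : ℝ) = 1 := by
          rw [Nat.choose_self]; norm_num
        rw [hch] at h1 h2
        linear_combination h1 - h2
      rcases mul_eq_zero.1 hz with h | h
      · exact absurd h hne
      · linarith [sub_eq_zero.1 h]

private lemma qq_collapse {Q : ℝ} (hQ0 : 0 < Q) (hQ1 : Q < 1) (n : ℕ) (s : ℝ) :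
    ∑ i ∈ range (n + 1), (n.choose i : ℝ) * s ^ i * qqV Q i * ((s - 1) / (Q - 1)) ^ (n - i)
    = (∑ l ∈ range (n + 1), (n.choose l : ℝ) * s ^ l * (-1 : ℝ) ^ (n - l) * qqc Q l)
        / (Q - 1) ^ n := by
  have hQne : Q - 1 ≠ 0 := by intro h; nlinarith
  rw [eq_div_iff (pow_ne_zero n hQne), Finset.sum_mul]
  have hterm : ∀ i ∈ range (n + 1),
      (n.choose i : ℝ) * s ^ i * qqV Q i * ((s - 1) / (Q - 1)) ^ (n - i) * (Q - 1) ^ n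
      = (n.choose i : ℝ) * s ^ i * (s - 1) ^ (n - i) * qqb Q i := by
    intro i hi
    rw [Finset.mem_range] at hi
    rw [qqV, div_pow, show (Q - 1) ^ n = (Q - 1) ^ i * (Q - 1) ^ (n - i) from by
      rw [← pow_add]; congr 1; omega]
    field_simp
  rw [Finset.sum_congr rfl hterm]
  have hswap := qq_swap_binom n s (s - 1) (qqc Q)
  have : ∑ i ∈ range (n + 1), (n.choose i : ℝ) * s ^ i * (s - 1) ^ (n - i) * qqb Q i
      = ∑ l ∈ range (n + 1), (n.choose l : ℝ) * s ^ l * ((s - 1) - s) ^ (n - l) * qqc Q l :=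
    hswap
  rw [this]
  refine Finset.sum_congr rfl fun l _ => ?_
  norm_num

private lemma qq_choose_id (n' r : ℕ) (hr : r ≤ n') :
    ((r : ℝ) + 2) * ((n' + 1).choose (r + 1) : ℝ)
      = (n'.choose (r + 1) : ℝ) + ((n' : ℝ) + 2) * (n'.choose r : ℝ) := by
  have h1 := Nat.choose_succ_right_eq n' r
  have h1' : (n'.choose (r + 1) : ℝ) * ((r : ℝ) + 1) = (n'.choose r : ℝ) * ((n' : ℝ) - r) := by
    have := congrArg (Nat.cast : ℕ → ℝ) h1
    push_cast [Nat.cast_sub hr] at this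
    convert this using 2 <;> push_cast <;> ring
  have h2 : (((n' + 1).choose (r + 1) : ℕ) : ℝ) = (n'.choose r : ℝ) + (n'.choose (r + 1) : ℝ) := by
    exact_mod_cast congrArg (Nat.cast : ℕ → ℝ) (Nat.choose_succ_succ n' r)
  rw [h2]
  linear_combination h1'

private lemma qq_comb (n' : ℕ) (H : ℕ → ℝ) :
    ∑ l ∈ range (n' + 2), ((n' + 1).choose l : ℝ) * ((l : ℝ) + 1) * (-1 : ℝ) ^ ((n' + 1) - l) * H l
    = ∑ i ∈ range (n' + 1), (-1 : ℝ) ^ (i + n') * (n'.choose i : ℝ) *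
        (-(H i) + ((n' : ℝ) + 2) * H (i + 1)) := by
  have hRHS : ∑ i ∈ range (n' + 1), (-1 : ℝ) ^ (i + n') * (n'.choose i : ℝ) *
        (-(H i) + ((n' : ℝ) + 2) * H (i + 1))
      = (∑ i ∈ range (n' + 1), (-1 : ℝ) ^ (i + n') * (n'.choose i : ℝ) * (-(H i)))
        + ∑ i ∈ range (n' + 1),
            ((n' : ℝ) + 2) * ((-1 : ℝ) ^ (i + n') * (n'.choose i : ℝ) * H (i + 1)) := by
    rw [← Finset.sum_add_distrib]
    exact Finset.sum_congr rfl fun i _ => by ring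
  rw [hRHS]
  rw [show (n' + 2) = (n' + 1) + 1 from rfl, Finset.sum_range_succ']
  rw [Finset.sum_range_succ' (fun i => (-1 : ℝ) ^ (i + n') * (n'.choose i : ℝ) * (-(H i))) n']
  have hext : ∑ r ∈ range n',
        (-1 : ℝ) ^ ((r + 1) + n') * (n'.choose (r + 1) : ℝ) * (-(H (r + 1)))
      = ∑ r ∈ range (n' + 1),
        (-1 : ℝ) ^ ((r + 1) + n') * (n'.choose (r + 1) : ℝ) * (-(H (r + 1))) := by
    refine Finset.sum_subset (Finset.range_subset_range.2 (by omega)) ?_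
    intro r _ hr
    have : n' < r + 1 := by simp only [Finset.mem_range] at *; omega
    rw [Nat.choose_eq_zero_of_lt this]
    push_cast; ring
  rw [hext]
  have hconst : ((n' + 1).choose 0 : ℝ) * ((0 : ℕ) + 1 : ℝ) * (-1 : ℝ) ^ ((n' + 1) - 0) * H 0
      = (-1 : ℝ) ^ (0 + n') * (n'.choose 0 : ℝ) * (-(H 0)) := by
    simp [pow_succ]
  have hmain : ∑ r ∈ range (n' + 1),
        ((n' + 1).choose (r + 1) : ℝ) * (((r + 1 : ℕ) : ℝ) + 1) * (-1 : ℝ) ^ ((n' + 1) - (r + 1))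
          * H (r + 1)
      = ∑ r ∈ range (n' + 1),
          ((-1 : ℝ) ^ ((r + 1) + n') * (n'.choose (r + 1) : ℝ) * (-(H (r + 1)))
            + ((n' : ℝ) + 2) * ((-1 : ℝ) ^ (r + n') * (n'.choose r : ℝ) * H (r + 1))) := by
    refine Finset.sum_congr rfl fun r hr => ?_
    rw [Finset.mem_range] at hr
    have hrn : r ≤ n' := by omega
    have hs1 : (n' + 1) - (r + 1) = n' - r := by omega
    rw [hs1, qq_neg_one_pow_sub n' r hrn]
    have hid := qq_choose_id n' r hrn
    push_cast
    linear_combination ((-1 : ℝ) ^ n' * (-1 : ℝ) ^ r * H (r + 1)) * hid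
  rw [hmain, Finset.sum_add_distrib, hconst]
  ring

private noncomputable def qqT (q : ℝ) (N n j : ℕ) : ℝ :=
  (q - 1) * (∑ l ∈ range (n + 1), (n.choose l : ℝ) * ((l : ℝ) + 1) * (-1 : ℝ) ^ (n - l)
      * (q ^ ((l + 1) * j) / (q ^ (N * (l + 1)) - 1))) / (q - 1) ^ n

private lemma qq_geo (q : ℝ) (hq0 : 0 < q) (hq1 : q < 1) (r : ℕ) (hr : 1 ≤ r) :
    HasSum (fun m : ℕ => (q ^ r) ^ m) (1 - q ^ r)⁻¹ :=
  hasSum_geometric_of_lt_one (pow_nonneg hq0.le r) (pow_lt_one₀ hq0.le hq1 (by omega))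

private lemma qq_hasSum_zero (q : ℝ) (hq0 : 0 < q) (hq1 : q < 1) (N : ℕ) (hN : 1 ≤ N)
    (j : ℕ) (hj : 1 ≤ j) :
    HasSum (fun m : ℕ => ((q ^ (N * m + j) - 1) / (q - 1))⁻¹ *
      (q ^ (N * m + j) - q ^ (2 * (N * m + j)))) (qqT q N 0 j) := by
  have hqne : q - 1 ≠ 0 := by intro h; nlinarith
  have hfun : (fun m : ℕ => ((q ^ (N * m + j) - 1) / (q - 1))⁻¹ *
      (q ^ (N * m + j) - q ^ (2 * (N * m + j))))
      = fun m : ℕ => (-(q - 1) * q ^ j) * (q ^ N) ^ m := by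
    funext m
    have hk : 1 ≤ N * m + j := by omega
    have hne := qq_pow_ne_one hq0 hq1 (N * m + j) hk
    have h2 : q ^ (2 * (N * m + j)) = (q ^ (N * m + j)) ^ 2 := by
      rw [← pow_mul]; congr 1; ring
    have hsplit : q ^ (N * m + j) = q ^ j * (q ^ N) ^ m := by
      rw [← pow_mul, ← pow_add]; congr 1; ring
    rw [inv_div, h2]
    rw [show q ^ (N * m + j) - (q ^ (N * m + j)) ^ 2
        = -(q ^ (N * m + j)) * (q ^ (N * m + j) - 1) from by ring]
    rw [show (q - 1) / (q ^ (N * m + j) - 1) * (-(q ^ (N * m + j)) * (q ^ (N * m + j) - 1))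
        = -(q - 1) * q ^ (N * m + j) * ((q ^ (N * m + j) - 1) / (q ^ (N * m + j) - 1)) from by
      ring]
    rw [div_self hne, mul_one, hsplit]
    ring
  rw [hfun]
  have hgeo := (qq_geo q hq0 hq1 N hN).mul_left (-(q - 1) * q ^ j)
  have hval : -(q - 1) * q ^ j * (1 - q ^ N)⁻¹ = qqT q N 0 j := by
    have hne := qq_pow_ne_one hq0 hq1 N hN
    rw [qqT]
    simp only [Finset.range_one, Finset.sum_singleton, Nat.choose_self, Nat.cast_one,
      Nat.cast_zero, pow_zero, mul_one, one_mul, div_one, Nat.zero_sub, zero_add]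
    rw [show (1 : ℝ) - q ^ N = -(q ^ N - 1) from by ring, inv_neg]
    field_simp
  rw [hval] at hgeo
  exact hgeo

private lemma qq_hasSum_pos (q : ℝ) (hq0 : 0 < q) (hq1 : q < 1) (N : ℕ) (hN : 1 ≤ N)
    (j n' : ℕ) :
    HasSum (fun m : ℕ => ((q ^ (N * m + j) - 1) / (q - 1)) ^ n' *
      (q ^ (N * m + j) - ((n' : ℝ) + 2) * q ^ (2 * (N * m + j))))
      (qqT q N (n' + 1) j) := by
  have hqne : q - 1 ≠ 0 := by intro h; nlinarith
  have hpne : ((q - 1) ^ n' : ℝ) ≠ 0 := pow_ne_zero _ hqne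
  set d : ℕ → ℝ := fun i => (-1 : ℝ) ^ (i + n') * (n'.choose i : ℝ) / (q - 1) ^ n' with hd
  have hs : ∀ i ∈ range (n' + 1), HasSum
      (fun m : ℕ => d i * (q ^ ((i + 1) * j) * (q ^ (N * (i + 1))) ^ m
        - ((n' : ℝ) + 2) * (q ^ ((i + 2) * j) * (q ^ (N * (i + 2))) ^ m)))
      (d i * (q ^ ((i + 1) * j) * (1 - q ^ (N * (i + 1)))⁻¹
        - ((n' : ℝ) + 2) * (q ^ ((i + 2) * j) * (1 - q ^ (N * (i + 2)))⁻¹))) := by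
    intro i _
    exact (((qq_geo q hq0 hq1 (N * (i + 1)) (by nlinarith [hN])).mul_left
        (q ^ ((i + 1) * j))).sub
      (((qq_geo q hq0 hq1 (N * (i + 2)) (by nlinarith [hN])).mul_left
        (q ^ ((i + 2) * j))).mul_left ((n' : ℝ) + 2))).mul_left (d i)
  have total := hasSum_sum hs
  have hpoint : ∀ m : ℕ, ((q ^ (N * m + j) - 1) / (q - 1)) ^ n' *
      (q ^ (N * m + j) - ((n' : ℝ) + 2) * q ^ (2 * (N * m + j)))
      = ∑ i ∈ range (n' + 1), d i * (q ^ ((i + 1) * j) * (q ^ (N * (i + 1))) ^ m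
        - ((n' : ℝ) + 2) * (q ^ ((i + 2) * j) * (q ^ (N * (i + 2))) ^ m)) := by
    intro m
    have hui : ∀ i : ℕ, q ^ ((i + 1) * j) * (q ^ (N * (i + 1))) ^ m
        = (q ^ (N * m + j)) ^ (i + 1) := by
      intro i
      rw [← pow_mul, ← pow_add, ← pow_mul]; congr 1; ring
    have hu2 : ∀ i : ℕ, q ^ ((i + 2) * j) * (q ^ (N * (i + 2))) ^ m
        = (q ^ (N * m + j)) ^ (i + 2) := by
      intro i
      rw [← pow_mul, ← pow_add, ← pow_mul]; congr 1; ring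
    have h2m : q ^ (2 * (N * m + j)) = (q ^ (N * m + j)) ^ 2 := by
      rw [← pow_mul]; congr 1; ring
    have hexp := sub_pow (q ^ (N * m + j)) 1 n'
    rw [div_pow, hexp, Finset.sum_div, Finset.sum_mul]
    refine Finset.sum_congr rfl fun i hi => ?_
    rw [hui i, hu2 i, h2m, hd]
    simp only [one_pow]
    ring
  have hfun : (fun m : ℕ => ∑ i ∈ range (n' + 1),
        d i * (q ^ ((i + 1) * j) * (q ^ (N * (i + 1))) ^ m
          - ((n' : ℝ) + 2) * (q ^ ((i + 2) * j) * (q ^ (N * (i + 2))) ^ m)))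
      = fun m : ℕ => ((q ^ (N * m + j) - 1) / (q - 1)) ^ n' *
        (q ^ (N * m + j) - ((n' : ℝ) + 2) * q ^ (2 * (N * m + j))) := by
    funext m; exact (hpoint m).symm
  rw [hfun] at total
  set H : ℕ → ℝ := fun l => q ^ ((l + 1) * j) / (q ^ (N * (l + 1)) - 1) with hH
  have hHval : ∀ l : ℕ, q ^ ((l + 1) * j) * (1 - q ^ (N * (l + 1)))⁻¹ = -(H l) := by
    intro l
    have hne := qq_pow_ne_one hq0 hq1 (N * (l + 1)) (by nlinarith [hN])
    have hHl : H l = q ^ ((l + 1) * j) / (q ^ (N * (l + 1)) - 1) := rfl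
    rw [hHl, show (1 : ℝ) - q ^ (N * (l + 1)) = -(q ^ (N * (l + 1)) - 1) from by ring, inv_neg,
      div_eq_mul_inv]
    ring
  have hval : ∑ i ∈ range (n' + 1), (d i * (q ^ ((i + 1) * j) * (1 - q ^ (N * (i + 1)))⁻¹
        - ((n' : ℝ) + 2) * (q ^ ((i + 2) * j) * (1 - q ^ (N * (i + 2)))⁻¹)))
      = qqT q N (n' + 1) j := by
    have hterm : ∀ i ∈ range (n' + 1),
        d i * (q ^ ((i + 1) * j) * (1 - q ^ (N * (i + 1)))⁻¹
          - ((n' : ℝ) + 2) * (q ^ ((i + 2) * j) * (1 - q ^ (N * (i + 2)))⁻¹))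
        = ((-1 : ℝ) ^ (i + n') * (n'.choose i : ℝ) *
            (-(H i) + ((n' : ℝ) + 2) * H (i + 1))) / (q - 1) ^ n' := by
      intro i _
      rw [hHval i, show q ^ ((i + 2) * j) * (1 - q ^ (N * (i + 2)))⁻¹ = -(H (i + 1)) from by
        have := hHval (i + 1)
        rwa [show (i + 1) + 1 = i + 2 from rfl] at this]
      rw [hd]
      ring
    rw [Finset.sum_congr rfl hterm, ← Finset.sum_div, ← qq_comb n' H, qqT]
    have hrfl : (∑ l ∈ range (n' + 1 + 1), ((n' + 1).choose l : ℝ) * ((l : ℝ) + 1) *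
          (-1 : ℝ) ^ (n' + 1 - l) * (q ^ ((l + 1) * j) / (q ^ (N * (l + 1)) - 1)))
        = ∑ l ∈ range (n' + 2), ((n' + 1).choose l : ℝ) * ((l : ℝ) + 1) *
          (-1 : ℝ) ^ (n' + 1 - l) * H l := rfl
    rw [hrfl, pow_succ]
    field_simp
  rw [hval] at total
  exact total

private lemma qq_L4 (q : ℝ) (hq0 : 0 < q) (hq1 : q < 1) (N : ℕ) (hN : 1 ≤ N)
    (βN : ℕ → ℝ) (hbeta : ∀ m, βN m = qqV (q ^ N) m) (n j : ℕ) :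
    qNumR q N ^ ((n : ℤ) - 1) *
      ((q ^ N : ℝ) ^ ((j : ℝ) / N) * qBernoulliPoly (q ^ N) βN n ((j : ℝ) / N))
    = qqT q N n j := by
  have hqne : q - 1 ≠ 0 := by intro h; nlinarith
  have hQ0 : (0 : ℝ) < q ^ N := pow_pos hq0 N
  have hQ1 : q ^ N < 1 := pow_lt_one₀ hq0.le hq1 (by omega)
  have hQne : q ^ N - 1 ≠ 0 := qq_pow_ne_one hq0 hq1 N hN
  have hNr : (N : ℝ) ≠ 0 := by positivity
  have hr1 : (q ^ N : ℝ) ^ ((j : ℝ) / N) = q ^ j := by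
    rw [← Real.rpow_natCast q N, ← Real.rpow_mul hq0.le,
      show (N : ℝ) * ((j : ℝ) / N) = (j : ℝ) from by field_simp, Real.rpow_natCast]
  have hr2 : ∀ i : ℕ, (q ^ N : ℝ) ^ ((i : ℝ) * ((j : ℝ) / N)) = q ^ (i * j) := by
    intro i
    rw [← Real.rpow_natCast q N, ← Real.rpow_mul hq0.le,
      show (N : ℝ) * ((i : ℝ) * ((j : ℝ) / N)) = ((i * j : ℕ) : ℝ) from by
        push_cast; field_simp, Real.rpow_natCast]
  have hr3 : qNumR (q ^ N) ((j : ℝ) / N) = (q ^ j - 1) / (q ^ N - 1) := by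
    rw [qNumR, hr1]
  have hr4 : qNumR q (N : ℝ) = (q ^ N - 1) / (q - 1) := by
    rw [qNumR, Real.rpow_natCast]
  have hpoly : qBernoulliPoly (q ^ N) βN n ((j : ℝ) / N)
      = ∑ i ∈ range (n + 1), (n.choose i : ℝ) * (q ^ j) ^ i * qqV (q ^ N) i *
          ((q ^ j - 1) / (q ^ N - 1)) ^ (n - i) := by
    rw [qBernoulliPoly]
    refine Finset.sum_congr rfl fun i _ => ?_
    rw [hr2 i, hr3, hbeta i, show (q ^ j : ℝ) ^ i = q ^ (i * j) from by
      rw [← pow_mul]; congr 1; ring]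
  rw [hpoly, qq_collapse hQ0 hQ1 n (q ^ j), hr1, hr4]
  have hsum : q ^ j * (∑ l ∈ range (n + 1),
        (n.choose l : ℝ) * (q ^ j) ^ l * (-1 : ℝ) ^ (n - l) * qqc (q ^ N) l)
      = (q ^ N - 1) * ∑ l ∈ range (n + 1), (n.choose l : ℝ) * ((l : ℝ) + 1) *
          (-1 : ℝ) ^ (n - l) * (q ^ ((l + 1) * j) / (q ^ (N * (l + 1)) - 1)) := by
    rw [Finset.mul_sum, Finset.mul_sum]
    refine Finset.sum_congr rfl fun l _ => ?_
    rw [qqc, show ((q ^ N : ℝ)) ^ (l + 1) = q ^ (N * (l + 1)) from by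
      rw [← pow_mul], show (q ^ j : ℝ) ^ l = q ^ (j * l) from by rw [← pow_mul],
      show (q : ℝ) ^ ((l + 1) * j) = q ^ (j * l) * q ^ j from by
        rw [← pow_add]; congr 1; ring]
    ring
  rw [show q ^ j * ((∑ l ∈ range (n + 1),
        (n.choose l : ℝ) * (q ^ j) ^ l * (-1 : ℝ) ^ (n - l) * qqc (q ^ N) l)
          / (q ^ N - 1) ^ n)
      = ((q ^ N - 1) * ∑ l ∈ range (n + 1), (n.choose l : ℝ) * ((l : ℝ) + 1) *
          (-1 : ℝ) ^ (n - l) * (q ^ ((l + 1) * j) / (q ^ (N * (l + 1)) - 1)))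
          / (q ^ N - 1) ^ n from by rw [← hsum]; ring]
  rcases n with _ | n'
  · simp only [Nat.cast_zero, zero_sub, zpow_neg, zpow_one, pow_zero, div_one]
    rw [inv_div, qqT, pow_zero, div_one]
    field_simp
  · rw [show ((n' + 1 : ℕ) : ℤ) - 1 = (n' : ℤ) from by push_cast; ring, zpow_natCast,
      div_pow, qqT]
    field_simp
    ring

/-- for a nontrivial Dirichlet character `χ` mod `N`, the generalized
Bernoulli–Carlitz fractions
`β_{χ,n} = Σ_{j=0}^{N-1} χ(j) [N]^{n-1} · (q^{j/N} β_n(j/N))|_{q→q^N}` satisfy, for all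
`n ≥ 0`, `β_{χ,n} = L_q(χ,1−n)(q − (n+1)q²) = Σ_{m≥1} χ(m) [m]^{n-1}(q^m − (n+1)q^{2m})`.
Here `βN` is the sequence of values at `q^N` of the Bernoulli–Carlitz fractions,
characterized by the Carlitz recurrence at `q^N`. -/
theorem genBernoulliCarlitz_eq_Lq (N : ℕ) [NeZero N] (χ : DirichletCharacter ℂ N)
    (hχ : χ ≠ 1) (q : ℝ) (hq : q ∈ Set.Ioo (0 : ℝ) 1)
    (βN : ℕ → ℝ) (h0 : βN 0 = 1)
    (hrec : ∀ m : ℕ, 1 ≤ m →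
      q ^ N * (∑ i ∈ Finset.range (m + 1), (m.choose i : ℝ) * (q ^ N) ^ i * βN i) - βN m
        = if m = 1 then 1 else 0)
    (n : ℕ) :
    (∑ j ∈ Finset.range N, χ (j : ZMod N) *
        ((qNumR q N ^ ((n : ℤ) - 1) : ℝ) : ℂ) *
        (((q ^ N : ℝ) ^ ((j : ℝ) / N) * qBernoulliPoly (q ^ N) βN n ((j : ℝ) / N) : ℝ) : ℂ)) =
      ∑' m : ℕ, χ (m : ZMod N) * ((qNumR q m ^ ((n : ℤ) - 1) : ℝ) : ℂ) *
        (((q ^ m - ((n : ℝ) + 1) * q ^ (2 * m) : ℝ)) : ℂ) := by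
  obtain ⟨hq0, hq1⟩ := hq
  have hNpos : 0 < N := Nat.pos_of_ne_zero (NeZero.ne N)
  have hN1 : 1 < N := by
    by_contra h
    have hN : N = 1 := by omega
    subst hN
    exact hχ (DirichletCharacter.level_one' χ rfl)
  haveI : Fact (1 < N) := ⟨hN1⟩
  have hchi0 : χ (0 : ZMod N) = 0 := by
    apply MulChar.map_nonunit
    exact not_isUnit_zero
  have hQ0 : (0 : ℝ) < q ^ N := pow_pos hq0 N
  have hQ1 : q ^ N < 1 := pow_lt_one₀ hq0.le hq1 (by omega)
  have hbeta : ∀ m, βN m = qqV (q ^ N) m := qq_betaN_eq hQ0 hQ1 βN h0 hrec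
  set G : ℕ → ℂ := fun k => χ (k : ZMod N) * ((qNumR q k ^ ((n : ℤ) - 1) : ℝ) : ℂ) *
      (((q ^ k - ((n : ℝ) + 1) * q ^ (2 * k) : ℝ)) : ℂ) with hG
  have hcastmod : ∀ j : ℕ, ∀ m : ℕ, ((N * m + j : ℕ) : ZMod N) = (j : ZMod N) := by
    intro j m
    push_cast [ZMod.natCast_self]
    ring
  have hfiber : ∀ j ∈ Finset.range N,
      HasSum (fun m : ℕ => G (N * m + j)) (χ (j : ZMod N) * ((qqT q N n j : ℝ) : ℂ)) := by
    intro j hj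
    rcases eq_or_ne j 0 with hj0 | hj0
    · subst hj0
      have hzero : ∀ m : ℕ, G (N * m + 0) = 0 := by
        intro m
        rw [hG]
        simp only [hcastmod 0 m, Nat.cast_zero, hchi0, zero_mul]
      have hval : χ ((0 : ℕ) : ZMod N) * ((qqT q N n 0 : ℝ) : ℂ) = 0 := by
        rw [Nat.cast_zero, hchi0, zero_mul]
      rw [hval]
      exact (hasSum_zero.congr_fun fun m => hzero m)
    · -- j ≥ 1
      set R : ℕ → ℝ := fun m => ((q ^ (N * m + j) - 1) / (q - 1)) ^ ((n : ℤ) - 1) *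
          (q ^ (N * m + j) - ((n : ℝ) + 1) * q ^ (2 * (N * m + j))) with hR
      have hrealsum : HasSum R (qqT q N n j) := by
        rcases n with _ | n'
        · have := qq_hasSum_zero q hq0 hq1 N (by omega) j (by omega)
          refine this.congr_fun fun m => ?_
          beta_reduce
          rw [hR]
          beta_reduce
          simp only [Nat.cast_zero, zero_sub, zpow_neg, zpow_one, zero_add, one_mul]
        · have := qq_hasSum_pos q hq0 hq1 N (by omega) j n'
          refine this.congr_fun fun m => ?_
          beta_reduce
          rw [hR]
          beta_reduce
          rw [show (((n' + 1 : ℕ) : ℤ) - 1) = (n' : ℤ) from by omega, zpow_natCast]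
          have : (((n' + 1 : ℕ) : ℝ) + 1) = ((n' : ℝ) + 2) := by push_cast; ring
          rw [this]
      have hCsum : HasSum (fun m : ℕ => ((R m : ℝ) : ℂ)) ((qqT q N n j : ℝ) : ℂ) :=
        Complex.hasSum_ofReal.mpr hrealsum
      have hC2 := hCsum.mul_left (χ (j : ZMod N))
      refine hC2.congr_fun fun m => ?_
      beta_reduce
      rw [hG, hR]
      beta_reduce
      rw [hcastmod j m]
      have hnum : qNumR q ((N * m + j : ℕ) : ℝ) = (q ^ (N * m + j) - 1) / (q - 1) := by
        rw [qNumR, Real.rpow_natCast]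
      rw [hnum, Complex.ofReal_mul]
      ring
  have hful : ∀ j ∈ Finset.range N,
      HasSum (fun k : ℕ => if k % N = j then G k else 0)
        (χ (j : ZMod N) * ((qqT q N n j : ℝ) : ℂ)) := by
    intro j hj
    rw [Finset.mem_range] at hj
    have hinj : Function.Injective (fun m : ℕ => N * m + j) := by
      intro a b hab
      simp only [] at hab
      have : N * a = N * b := by omega
      exact Nat.eq_of_mul_eq_mul_left hNpos this
    have hvan : ∀ k : ℕ, k ∉ Set.range (fun m : ℕ => N * m + j) →
        (if k % N = j then G k else 0) = 0 := by
      intro k hk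
      rw [if_neg]
      intro hmod
      exact hk ⟨k / N, by simp only []; rw [← hmod]; exact Nat.div_add_mod k N⟩
    have hcomp : ((fun k : ℕ => if k % N = j then G k else 0) ∘ (fun m : ℕ => N * m + j))
        = fun m : ℕ => G (N * m + j) := by
      funext m
      simp only [Function.comp_apply]
      rw [if_pos]
      rw [Nat.mul_add_mod, Nat.mod_eq_of_lt hj]
    exact (hinj.hasSum_iff hvan).mp (by rw [hcomp]; exact hfiber j (Finset.mem_range.mpr hj))
  have htotal := hasSum_sum hful
  have hpt : (fun k : ℕ => ∑ j ∈ Finset.range N, if k % N = j then G k else 0) = G := by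
    funext k
    rw [Finset.sum_ite_eq (Finset.range N) (k % N) (fun _ => G k)]
    rw [if_pos (Finset.mem_range.mpr (Nat.mod_lt k hNpos))]
  rw [hpt] at htotal
  have hts : (∑' m : ℕ, χ (m : ZMod N) * ((qNumR q m ^ ((n : ℤ) - 1) : ℝ) : ℂ) *
        (((q ^ m - ((n : ℝ) + 1) * q ^ (2 * m) : ℝ)) : ℂ))
      = ∑ j ∈ Finset.range N, χ (j : ZMod N) * ((qqT q N n j : ℝ) : ℂ) :=
    htotal.tsum_eq
  rw [hts]
  refine Finset.sum_congr rfl fun j _ => ?_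
  rw [mul_assoc, ← Complex.ofReal_mul,
    qq_L4 q hq0 hq1 N (by omega) βN hbeta n j]
end
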